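/- arXiv:2404.17696 — 7 statements merged into one kernel-verified Lean document; each statement's English description precedes it below -/
import Mathlib

section
/- Let f : ℝⁿ → ℝ be continuously differentiable, C ⊆ ℝⁿ closed, x̄ ∈ C, and d ∈ T_C(x̄). Suppose x̄ is a local optimal solution of min f over C in direction d (i.e., ∃ ρ, δ > 0 with f(x) ≥ f(x̄) for all x ∈ C ∩ (x̄ + V_{ρ,δ}(d))) and ∇f(x̄)·d = 0. Then −∇f(x̄) ∈ N_C(x̄; d), the directional limiting normal cone to C at x̄ in direction d. -/
open Filter Topology Set
open scoped RealInnerProductSpace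

noncomputable section

variable {E : Type*} [NormedAddCommGroup E] [InnerProductSpace ℝ E]

/-- Bouligand (contingent) tangent cone. -/
def tangentConeB (S : Set E) (x : E) : Set E :=
  {d | ∃ (t : ℕ → ℝ) (dk : ℕ → E), (∀ k, 0 < t k) ∧
    Tendsto t atTop (nhds 0) ∧ Tendsto dk atTop (nhds d) ∧
    ∀ k, x + t k • dk k ∈ S}

/-- Outer second-order tangent set. -/
def secondTangent (S : Set E) (x d : E) : Set E :=
  {w | ∃ (t : ℕ → ℝ) (wk : ℕ → E), (∀ k, 0 < t k) ∧
    Tendsto t atTop (nhds 0) ∧ Tendsto wk atTop (nhds w) ∧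
    ∀ k, x + t k • d + ((1/2 : ℝ) * t k ^ 2) • wk k ∈ S}

/-- Asymptotic second-order tangent cone. -/
def asympTangent (S : Set E) (x d : E) : Set E :=
  {w | ∃ (t r : ℕ → ℝ) (wk : ℕ → E), (∀ k, 0 < t k) ∧ (∀ k, 0 < r k) ∧
    Tendsto t atTop (nhds 0) ∧ Tendsto r atTop (nhds 0) ∧
    Tendsto (fun k => t k / r k) atTop (nhds 0) ∧
    Tendsto wk atTop (nhds w) ∧
    ∀ k, x + t k • d + ((1/2 : ℝ) * t k * r k) • wk k ∈ S}

/-- Fréchet (regular) normal cone (empty, by convention, outside of `S`). -/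
def frechetNormal (S : Set E) (x : E) : Set E :=
  {v | x ∈ S ∧ ∀ ε > (0:ℝ), ∃ δ > (0:ℝ), ∀ y ∈ S, ‖y - x‖ < δ →
    ⟪v, y - x⟫ ≤ ε * ‖y - x‖}

/-- Limiting (Mordukhovich) normal cone. -/
def limitingNormal (S : Set E) (x : E) : Set E :=
  {v | ∃ (xk vk : ℕ → E), Tendsto xk atTop (nhds x) ∧
    Tendsto vk atTop (nhds v) ∧ ∀ k, vk k ∈ frechetNormal S (xk k)}

/-- Directional limiting normal cone. -/
def dirLimitingNormal (S : Set E) (x d : E) : Set E :=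
  {v | ∃ (t : ℕ → ℝ) (dk vk : ℕ → E), (∀ k, 0 < t k) ∧
    Tendsto t atTop (nhds 0) ∧ Tendsto dk atTop (nhds d) ∧
    Tendsto vk atTop (nhds v) ∧ ∀ k, vk k ∈ frechetNormal S (x + t k • dk k)}

/-- Directional regular (Clarke) tangent cone. -/
def dirClarkeTangent (S : Set E) (x d : E) : Set E :=
  {v | ∀ (t : ℕ → ℝ) (dk : ℕ → E), (∀ k, 0 < t k) →
    Tendsto t atTop (nhds 0) → Tendsto dk atTop (nhds d) →
    (∀ k, x + t k • dk k ∈ S) →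
    ∃ vk : ℕ → E, Tendsto vk atTop (nhds v) ∧
      ∀ k, vk k ∈ tangentConeB S (x + t k • dk k)}

/-- Directional neighborhood `V_{ρ,δ}(d)`. -/
def dirNbhd (d : E) (ρ δ : ℝ) : Set E :=
  {w | ‖w‖ ≤ δ ∧ ‖‖d‖ • w - ‖w‖ • d‖ ≤ ρ * ‖w‖ * ‖d‖}

/-- Support function, with values in `EReal` (so that `σ_∅ = -∞`). -/
def suppFn (A : Set E) (l : E) : EReal :=
  ⨆ u ∈ A, ((⟪l, u⟫ : ℝ) : EReal)

/-- If `y` locally minimizes `f + t⁻¹‖· - x‖²` over `S`, then the negative gradient of the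
penalized function belongs to the Fréchet normal cone of `S` at `y`. -/
lemma aux_frechet [CompleteSpace E] {S : Set E} {y x : E} (hyS : y ∈ S) {f : E → ℝ}
    (hfd : DifferentiableAt ℝ f y) {t r : ℝ} (ht : 0 < t) (hr : 0 < r)
    (hmin : ∀ z ∈ S, ‖z - y‖ < r → f y + t⁻¹ * ‖y - x‖ ^ 2 ≤ f z + t⁻¹ * ‖z - x‖ ^ 2) :
    -gradient f y - (2 * t⁻¹) • (y - x) ∈ frechetNormal S y := by
  refine ⟨hyS, fun ε hε => ?_⟩
  have hG : HasFDerivAt f ((InnerProductSpace.toDual ℝ E) (gradient f y)) y :=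
    hasGradientAt_iff_hasFDerivAt.mp hfd.hasGradientAt
  have hlo := (hG.isLittleO).def (half_pos hε)
  rw [Metric.eventually_nhds_iff] at hlo
  obtain ⟨δ₁, hδ₁, hball⟩ := hlo
  have hit : (0:ℝ) < t⁻¹ := by positivity
  refine ⟨min r (min δ₁ (ε / (2 * t⁻¹))), by positivity, fun z hzS hzlt => ?_⟩
  have h1 := hmin z hzS (lt_of_lt_of_le hzlt (min_le_left _ _))
  have h2 : ‖f z - f y - ⟪gradient f y, z - y⟫‖ ≤ ε / 2 * ‖z - y‖ := by
    have hd2 : dist z y < δ₁ := by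
      rw [dist_eq_norm]
      exact lt_of_lt_of_le hzlt (le_trans (min_le_right _ _) (min_le_left _ _))
    simpa [InnerProductSpace.toDual_apply_apply] using hball hd2
  have h3 : ‖z - x‖ ^ 2 = ‖y - x‖ ^ 2 + 2 * ⟪y - x, z - y⟫ + ‖z - y‖ ^ 2 := by
    have hzx : z - x = (y - x) + (z - y) := by abel
    rw [hzx, norm_add_sq_real]
  have h4 : ‖z - y‖ ≤ ε / (2 * t⁻¹) :=
    le_of_lt (lt_of_lt_of_le hzlt (le_trans (min_le_right _ _) (min_le_right _ _)))
  have h5 : ⟪-gradient f y - (2 * t⁻¹) • (y - x), z - y⟫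
      = -⟪gradient f y, z - y⟫ - (2 * t⁻¹) * ⟪y - x, z - y⟫ := by
    rw [inner_sub_left, inner_neg_left, real_inner_smul_left]
  rw [h5]
  have habs : |f z - f y - ⟪gradient f y, z - y⟫| ≤ ε / 2 * ‖z - y‖ := by
    rwa [Real.norm_eq_abs] at h2
  obtain ⟨ha1, ha2⟩ := abs_le.mp habs
  rw [h3] at h1
  have h6 : t⁻¹ * ‖z - y‖ ^ 2 ≤ ε / 2 * ‖z - y‖ := by
    have h7 : t⁻¹ * ‖z - y‖ ≤ ε / 2 := by
      calc t⁻¹ * ‖z - y‖ ≤ t⁻¹ * (ε / (2 * t⁻¹)) := mul_le_mul_of_nonneg_left h4 hit.le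
        _ = ε / 2 := by field_simp
    calc t⁻¹ * ‖z - y‖ ^ 2 = (t⁻¹ * ‖z - y‖) * ‖z - y‖ := by ring
      _ ≤ ε / 2 * ‖z - y‖ := mul_le_mul_of_nonneg_right h7 (norm_nonneg _)
  nlinarith [h1, ha1, h6]

/-- Scaling invariance of the directional condition. -/
lemma dir_scale {d e : E} {ρ : ℝ} (h : ‖‖d‖ • e - ‖e‖ • d‖ ≤ ρ * ‖e‖ * ‖d‖) {s : ℝ}
    (hs : 0 ≤ s) : ‖‖d‖ • (s • e) - ‖s • e‖ • d‖ ≤ ρ * ‖s • e‖ * ‖d‖ := by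
  rw [norm_smul, Real.norm_eq_abs, abs_of_nonneg hs]
  have h1 : ‖d‖ • (s • e) - (s * ‖e‖) • d = s • (‖d‖ • e - ‖e‖ • d) := by
    rw [smul_sub, smul_comm s ‖d‖ e, mul_smul]
  rw [h1, norm_smul, Real.norm_eq_abs, abs_of_nonneg hs]
  calc s * ‖‖d‖ • e - ‖e‖ • d‖ ≤ s * (ρ * ‖e‖ * ‖d‖) := mul_le_mul_of_nonneg_left h hs
    _ = ρ * (s * ‖e‖) * ‖d‖ := by ring

/-- Vectors close to `d` satisfy the directional condition. -/
lemma dir_near {d : E} {ρ : ℝ} (hρ : 0 < ρ) :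
    ∃ c, 0 < c ∧ c ≤ 1 ∧ ∀ e : E, ‖e - d‖ ≤ c → ‖‖d‖ • e - ‖e‖ • d‖ ≤ ρ * ‖e‖ * ‖d‖ := by
  by_cases hd0 : d = 0
  · exact ⟨1, one_pos, le_rfl, fun e _ => by simp [hd0]⟩
  · have hdn : 0 < ‖d‖ := norm_pos_iff.mpr hd0
    refine ⟨min 1 (min (ρ * ‖d‖ / 4) (‖d‖ / 2)), by positivity, min_le_left _ _, fun e he => ?_⟩
    have he1 : ‖e - d‖ ≤ ρ * ‖d‖ / 4 :=
      le_trans he (le_trans (min_le_right _ _) (min_le_left _ _))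
    have he2 : ‖e - d‖ ≤ ‖d‖ / 2 :=
      le_trans he (le_trans (min_le_right _ _) (min_le_right _ _))
    have hne : ‖d‖ / 2 ≤ ‖e‖ := by
      have := norm_sub_norm_le d e
      rw [norm_sub_rev e d] at he2
      linarith
    have key : ‖‖d‖ • e - ‖e‖ • d‖ ≤ 2 * ‖d‖ * ‖e - d‖ := by
      have h1 : ‖d‖ • e - ‖e‖ • d = ‖d‖ • (e - d) + (‖d‖ - ‖e‖) • d := by
        rw [smul_sub, sub_smul]; abel
      rw [h1]
      have h2 : ‖(‖d‖ - ‖e‖) • d‖ ≤ ‖e - d‖ * ‖d‖ := by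
        rw [norm_smul, Real.norm_eq_abs]
        have h3 : |‖d‖ - ‖e‖| ≤ ‖e - d‖ := by
          rw [norm_sub_rev e d]; exact abs_norm_sub_norm_le d e
        exact mul_le_mul_of_nonneg_right h3 (norm_nonneg _)
      calc ‖‖d‖ • (e - d) + (‖d‖ - ‖e‖) • d‖ ≤ ‖‖d‖ • (e - d)‖ + ‖(‖d‖ - ‖e‖) • d‖ :=
            norm_add_le _ _
        _ ≤ ‖d‖ * ‖e - d‖ + ‖e - d‖ * ‖d‖ := by
            rw [norm_smul, Real.norm_eq_abs, abs_of_nonneg (norm_nonneg d)]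
            exact add_le_add le_rfl h2
        _ = 2 * ‖d‖ * ‖e - d‖ := by ring
    calc ‖‖d‖ • e - ‖e‖ • d‖ ≤ 2 * ‖d‖ * ‖e - d‖ := key
      _ ≤ 2 * ‖d‖ * (ρ * ‖d‖ / 4) := mul_le_mul_of_nonneg_left he1 (by positivity)
      _ = ρ * (‖d‖ / 2) * ‖d‖ := by ring
      _ ≤ ρ * ‖e‖ * ‖d‖ := by
          nlinarith [mul_le_mul_of_nonneg_left hne (le_of_lt hρ), norm_nonneg d]

set_option maxHeartbeats 1000000 in
theorem stmt12 {n : ℕ} (f : EuclideanSpace ℝ (Fin n) → ℝ) (hf : ContDiff ℝ 1 f)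
    (C : Set (EuclideanSpace ℝ (Fin n))) (hC : IsClosed C)
    (xb : EuclideanSpace ℝ (Fin n)) (hxb : xb ∈ C)
    (d : EuclideanSpace ℝ (Fin n)) (hd : d ∈ tangentConeB C xb)
    (hopt : ∃ ρ > (0:ℝ), ∃ δ > (0:ℝ), ∀ x ∈ C, x - xb ∈ dirNbhd d ρ δ → f xb ≤ f x)
    (hcrit : fderiv ℝ f xb d = 0) :
    -gradient f xb ∈ dirLimitingNormal C xb d := by
  classical
  obtain ⟨t, dk, ht, ht0, hdk, hmem⟩ := hd
  obtain ⟨ρ, hρ, δ, hδ, hopt⟩ := hopt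
  obtain ⟨c, hc0, hc1, hcdir⟩ := dir_near (d := d) hρ
  have hfdiff : Differentiable ℝ f := hf.differentiable one_ne_zero
  set L := fderiv ℝ f xb with hL
  set xk : ℕ → EuclideanSpace ℝ (Fin n) := fun k => xb + t k • dk k with hxk
  set εs : ℕ → ℝ := fun k => (t k)⁻¹ * (f (xk k) - f xb) with hεs
  have htne : ∀ k, t k ≠ 0 := fun k => (ht k).ne'
  -- the function values along x_k are o(t_k) above f xb
  have hεs0 : Tendsto εs atTop (𝓝 0) := by
    have hR : (fun h => f (xb + h) - f xb - L h) =o[𝓝 0] (fun h => h) :=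
      hasFDerivAt_iff_isLittleO_nhds_zero.mp (hfdiff xb).hasFDerivAt
    have hhk : Tendsto (fun k => t k • dk k) atTop (𝓝 (0 : EuclideanSpace ℝ (Fin n))) := by
      have := ht0.smul hdk
      simpa using this
    have hcomp := hR.comp_tendsto hhk
    have hbig : (fun k => t k • dk k) =O[atTop] t := by
      rw [Asymptotics.isBigO_iff]
      refine ⟨‖d‖ + 1, ?_⟩
      have hev : ∀ᶠ k in atTop, ‖dk k‖ ≤ ‖d‖ + 1 :=
        (hdk.norm.eventually_lt_const (by linarith [norm_nonneg d])).mono fun k h => h.le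
      filter_upwards [hev] with k hk
      simp only [norm_smul, Real.norm_eq_abs, abs_of_pos (ht k)]
      calc t k * ‖dk k‖ ≤ t k * (‖d‖ + 1) := mul_le_mul_of_nonneg_left hk (ht k).le
        _ = (‖d‖ + 1) * t k := by ring
    have hRt := (hcomp.trans_isBigO hbig).tendsto_div_nhds_zero
    have hLd : Tendsto (fun k => L (dk k)) atTop (𝓝 0) := by
      have h1 := (L.continuous.tendsto d).comp hdk
      rw [show L d = 0 from hcrit] at h1
      exact h1
    have heq : ∀ k, εs k
        = (f (xb + t k • dk k) - f xb - L (t k • dk k)) / t k + L (dk k) := by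
      intro k
      have hls : L (t k • dk k) = t k * L (dk k) := by
        rw [map_smul, smul_eq_mul]
      rw [hεs]
      simp only [hxk]
      rw [hls]
      field_simp [htne k]
      ring
    have hsum := hRt.add hLd
    rw [add_zero] at hsum
    exact hsum.congr fun k => (heq k).symm
  -- the feasible sets
  set V' : Set (EuclideanSpace ℝ (Fin n)) := {x | x - xb ∈ dirNbhd d ρ δ} with hV'
  have hV'c : IsClosed V' := by
    have h2 : IsClosed (dirNbhd d ρ δ) := by
      rw [dirNbhd, setOf_and]
      exact (isClosed_le (by fun_prop) continuous_const).inter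
        (isClosed_le (by fun_prop) (by fun_prop))
    exact h2.preimage (continuous_id.sub continuous_const)
  set K : ℕ → Set (EuclideanSpace ℝ (Fin n)) :=
    fun k => (C ∩ V') ∩ Metric.closedBall (xk k) (t k) with hK
  set g : ℕ → EuclideanSpace ℝ (Fin n) → ℝ :=
    fun k x => f x + (t k)⁻¹ * ‖x - xk k‖ ^ 2 with hg
  have hgcont : ∀ k, Continuous (g k) := by
    intro k
    apply hf.continuous.add
    fun_prop
  have hminex : ∀ k, ∃ yk, (xk k ∈ K k) → yk ∈ K k ∧ ∀ z ∈ K k, g k yk ≤ g k z := by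
    intro k
    by_cases h : xk k ∈ K k
    · have hcpt : IsCompact (K k) :=
        (isCompact_closedBall (xk k) (t k)).inter_left (hC.inter hV'c)
      obtain ⟨yk, hykK, hykmin⟩ := hcpt.exists_isMinOn ⟨xk k, h⟩ (hgcont k).continuousOn
      exact ⟨yk, fun _ => ⟨hykK, fun z hz => isMinOn_iff.mp hykmin z hz⟩⟩
    · exact ⟨xb, fun h' => absurd h' h⟩
  choose y hy using hminex
  set s : ℕ → ℝ := fun k => (t k)⁻¹ * ‖y k - xk k‖ with hs
  have hsnn : ∀ k, 0 ≤ s k := fun k => mul_nonneg (inv_nonneg.mpr (ht k).le) (norm_nonneg _)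
  have hdkc : ∀ᶠ k in atTop, ‖dk k - d‖ ≤ c := by
    filter_upwards [hdk (Metric.closedBall_mem_nhds d hc0)] with k hk
    have hk' : dk k ∈ Metric.closedBall d c := hk
    rwa [Metric.mem_closedBall, dist_eq_norm] at hk'
  have htd : ∀ᶠ k in atTop, t k * ‖dk k‖ ≤ δ := by
    have h1 : Tendsto (fun k => t k * ‖dk k‖) atTop (𝓝 0) := by
      have := ht0.mul hdk.norm
      simpa using this
    exact h1.eventually_le_const hδ
  have hxkK : ∀ᶠ k in atTop, xk k ∈ K k := by
    filter_upwards [hdkc, htd] with k h1 h2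
    refine ⟨⟨hmem k, ?_⟩, Metric.mem_closedBall_self (ht k).le⟩
    have hw : xk k - xb = t k • dk k := by simp [hxk]
    rw [hV', mem_setOf_eq, hw]
    constructor
    · rw [norm_smul, Real.norm_eq_abs, abs_of_pos (ht k)]
      exact h2
    · exact dir_scale (hcdir _ h1) (ht k).le
  have hQ : ∀ᶠ k in atTop, s k ^ 2 ≤ εs k := by
    filter_upwards [hxkK] with k hk
    obtain ⟨hykK, hykmin⟩ := hy k hk
    have h1 : g k (y k) ≤ g k (xk k) := hykmin _ hk
    have h2 : f xb ≤ f (y k) := hopt _ hykK.1.1 hykK.1.2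
    have h3 : g k (xk k) = f (xk k) := by simp [hg]
    have h4 : (t k)⁻¹ * ‖y k - xk k‖ ^ 2 ≤ f (xk k) - f xb := by
      rw [h3] at h1
      simp only [hg] at h1
      linarith
    have h5 : s k ^ 2 = (t k)⁻¹ * ((t k)⁻¹ * ‖y k - xk k‖ ^ 2) := by
      simp only [hs]; ring
    rw [h5, hεs]
    exact mul_le_mul_of_nonneg_left h4 (inv_nonneg.mpr (ht k).le)
  have hs0 : Tendsto s atTop (𝓝 0) := by
    have hsq : Tendsto (fun k => s k ^ 2) atTop (𝓝 0) :=
      squeeze_zero' (Eventually.of_forall fun k => by positivity) hQ hεs0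
    have h1 : Tendsto (fun k => Real.sqrt (s k ^ 2)) atTop (𝓝 0) := by
      have := (Real.continuous_sqrt.tendsto 0).comp hsq
      simpa [Function.comp_def] using this
    exact h1.congr fun k => Real.sqrt_sq (hsnn k)
  have hnyxk : ∀ k, ‖y k - xk k‖ = t k * s k := by
    intro k
    simp only [hs]
    rw [← mul_assoc, mul_inv_cancel₀ (htne k), one_mul]
  have hy0 : Tendsto y atTop (𝓝 xb) := by
    have h1 : Tendsto (fun k => y k - xb) atTop (𝓝 (0 : EuclideanSpace ℝ (Fin n))) := by
      apply squeeze_zero_norm (a := fun k => t k * s k + t k * ‖dk k‖)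
      · intro k
        have htri : ‖y k - xb‖ ≤ ‖y k - xk k‖ + ‖xk k - xb‖ := by
          have := norm_sub_le_norm_sub_add_norm_sub (y k) (xk k) xb
          exact this
        rw [hnyxk k] at htri
        have hxkxb : ‖xk k - xb‖ = t k * ‖dk k‖ := by
          rw [show xk k - xb = t k • dk k from by simp [hxk], norm_smul, Real.norm_eq_abs,
            abs_of_pos (ht k)]
        rw [hxkxb] at htri
        exact htri
      · have h2 : Tendsto (fun k => t k * s k) atTop (𝓝 0) := by
          have := ht0.mul hs0
          simpa using this
        have h3 : Tendsto (fun k => t k * ‖dk k‖) atTop (𝓝 0) := by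
          have := ht0.mul hdk.norm
          simpa using this
        have := h2.add h3
        simpa using this
    have := h1.add_const xb
    simpa using this
  set d' : ℕ → EuclideanSpace ℝ (Fin n) := fun k => (t k)⁻¹ • (y k - xb) with hd'
  have hyd' : ∀ k, xb + t k • d' k = y k := by
    intro k
    rw [hd']
    simp [smul_inv_smul₀ (htne k)]
  have hd'dk : ∀ k, d' k - dk k = (t k)⁻¹ • (y k - xk k) := by
    intro k
    have h0 : y k - xb = (y k - xk k) + t k • dk k := by
      simp only [hxk]; abel
    simp only [hd']
    rw [h0, smul_add, inv_smul_smul₀ (htne k)]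
    abel
  have hd'0 : Tendsto d' atTop (𝓝 d) := by
    have h1 : Tendsto (fun k => d' k - dk k) atTop (𝓝 (0 : EuclideanSpace ℝ (Fin n))) := by
      apply squeeze_zero_norm (a := s)
      · intro k
        rw [hd'dk k, norm_smul, Real.norm_eq_abs, abs_of_pos (inv_pos.mpr (ht k))]
      · exact hs0
    have := h1.add hdk
    simpa using this
  have hd'c : ∀ᶠ k in atTop, ‖d' k - d‖ ≤ c / 2 := by
    have h1 : Tendsto (fun k => ‖d' k - d‖) atTop (𝓝 0) := by
      have h2 : Tendsto (fun k => d' k - d) atTop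
          (𝓝 (0 : EuclideanSpace ℝ (Fin n))) := by
        have h3 := hd'0.sub (tendsto_const_nhds :
          Tendsto (fun _ : ℕ => d) atTop (𝓝 d))
        simpa using h3
      simpa using h2.norm
    exact h1.eventually_le_const (by positivity)
  have hsmall : ∀ᶠ k in atTop, s k ≤ 1/2 := hs0.eventually_le_const (by norm_num)
  have htδ : ∀ᶠ k in atTop, t k * (‖d‖ + c) ≤ δ := by
    have h1 : Tendsto (fun k => t k * (‖d‖ + c)) atTop (𝓝 0) := by
      simpa using ht0.mul_const (‖d‖ + c)
    exact h1.eventually_le_const hδ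
  have hint : ∀ᶠ k in atTop, ∀ z ∈ C, ‖z - y k‖ < c/4 * t k → z ∈ K k := by
    filter_upwards [hd'c, hsmall, htδ, hxkK] with k h1 h2 h3 hk
    intro z hzC hz
    have hit : (0:ℝ) < (t k)⁻¹ := inv_pos.mpr (ht k)
    set e := (t k)⁻¹ • (z - xb) with he
    have hte : t k • e = z - xb := smul_inv_smul₀ (htne k) _
    have hed' : ‖e - d' k‖ < c/4 := by
      have h4 : e - d' k = (t k)⁻¹ • (z - y k) := by
        simp only [he, hd', ← smul_sub]
        congr 1
        abel
      rw [h4, norm_smul, Real.norm_eq_abs, abs_of_pos hit]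
      calc (t k)⁻¹ * ‖z - y k‖ < (t k)⁻¹ * (c/4 * t k) := mul_lt_mul_of_pos_left hz hit
        _ = c/4 := by
              rw [mul_comm ((t k)⁻¹) (c/4 * t k), mul_assoc, mul_inv_cancel₀ (htne k), mul_one]
    have hed : ‖e - d‖ ≤ c := by
      calc ‖e - d‖ ≤ ‖e - d' k‖ + ‖d' k - d‖ := norm_sub_le_norm_sub_add_norm_sub e (d' k) d
        _ ≤ c/4 + c/2 := add_le_add hed'.le h1
        _ ≤ c := by linarith
    have hdir := dir_scale (hcdir e hed) (ht k).le
    rw [hte] at hdir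
    have hznorm : ‖z - xb‖ ≤ δ := by
      have h4 : ‖e‖ ≤ ‖d‖ + c := by
        calc ‖e‖ = ‖d + (e - d)‖ := by congr 1; abel
          _ ≤ ‖d‖ + ‖e - d‖ := norm_add_le _ _
          _ ≤ ‖d‖ + c := by linarith
      calc ‖z - xb‖ = ‖t k • e‖ := by rw [hte]
        _ = t k * ‖e‖ := by rw [norm_smul, Real.norm_eq_abs, abs_of_pos (ht k)]
        _ ≤ t k * (‖d‖ + c) := mul_le_mul_of_nonneg_left h4 (ht k).le
        _ ≤ δ := h3
    refine ⟨⟨hzC, ⟨hznorm, hdir⟩⟩, ?_⟩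
    rw [Metric.mem_closedBall, dist_eq_norm]
    have h5 : ‖z - xk k‖ ≤ ‖z - y k‖ + ‖y k - xk k‖ :=
      norm_sub_le_norm_sub_add_norm_sub z (y k) (xk k)
    rw [hnyxk k] at h5
    have hc4 : c/4 * t k ≤ 1/4 * t k :=
      mul_le_mul_of_nonneg_right (by linarith) (ht k).le
    nlinarith [h5, hz, h2, ht k]
  set v : ℕ → EuclideanSpace ℝ (Fin n) :=
    fun k => -gradient f (y k) - (2 * (t k)⁻¹) • (y k - xk k) with hv
  have hgradc : Continuous (fun x => gradient f x) := by
    have h1 : Continuous (fderiv ℝ f) := hf.continuous_fderiv one_ne_zero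
    exact ((InnerProductSpace.toDual ℝ (EuclideanSpace ℝ (Fin n))).symm.continuous).comp h1
  have hv0 : Tendsto v atTop (𝓝 (-gradient f xb)) := by
    have h1 : Tendsto (fun k => (2 * (t k)⁻¹) • (y k - xk k)) atTop
        (𝓝 (0 : EuclideanSpace ℝ (Fin n))) := by
      apply squeeze_zero_norm (a := fun k => 2 * s k)
      · intro k
        rw [norm_smul, Real.norm_eq_abs,
          abs_of_pos (mul_pos two_pos (inv_pos.mpr (ht k))), hs]
        apply le_of_eq
        ring
      · have := hs0.const_mul 2
        simpa using this
    have h2 : Tendsto (fun k => -gradient f (y k)) atTop (𝓝 (-gradient f xb)) :=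
      ((hgradc.tendsto xb).comp hy0).neg
    have := h2.sub h1
    simpa using this
  have hvfn : ∀ᶠ k in atTop, v k ∈ frechetNormal C (xb + t k • d' k) := by
    filter_upwards [hint, hxkK] with k h1 hk
    rw [hyd' k]
    obtain ⟨hykK, hykmin⟩ := hy k hk
    have hr4 : (0:ℝ) < c/4 * t k := mul_pos (by positivity) (ht k)
    refine aux_frechet (S := C) (x := xk k) (f := f) hykK.1.1 (hfdiff _) (ht k) hr4 ?_
    intro z hz hznear
    have hm := hykmin z (h1 z hz hznear)
    simpa [hg] using hm
  obtain ⟨N, hN⟩ := eventually_atTop.mp hvfn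
  exact ⟨fun k => t (k + N), fun k => d' (k + N), fun k => v (k + N),
    fun k => ht _, ht0.comp (tendsto_add_atTop_nat N), hd'0.comp (tendsto_add_atTop_nat N),
    hv0.comp (tendsto_add_atTop_nat N), fun k => hN _ (Nat.le_add_left N k)⟩
end
end

section
/- Let C ⊆ ℝⁿ be closed, x̄ ∈ C, and d ∉ T_C(x̄). Then there exist ρ, δ > 0 such that C ∩ (x̄ + V_{ρ,δ}(d)) = {x̄}; consequently x̄ is automatically a local optimal solution in direction d for any continuous objective. -/
open Filter Topology Set
open scoped RealInnerProductSpace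

noncomputable section

variable {E : Type*} [NormedAddCommGroup E] [InnerProductSpace ℝ E]

theorem stmt13 {n : ℕ} (C : Set (EuclideanSpace ℝ (Fin n))) (hC : IsClosed C)
    (xb : EuclideanSpace ℝ (Fin n)) (hxb : xb ∈ C)
    (d : EuclideanSpace ℝ (Fin n)) (hd : d ∉ tangentConeB C xb) :
    (∃ ρ > (0:ℝ), ∃ δ > (0:ℝ), {x ∈ C | x - xb ∈ dirNbhd d ρ δ} = {xb}) ∧
    ∀ f : EuclideanSpace ℝ (Fin n) → ℝ, Continuous f →
      ∃ ρ > (0:ℝ), ∃ δ > (0:ℝ), ∀ x ∈ C, x - xb ∈ dirNbhd d ρ δ → f xb ≤ f x := by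
  have hd0 : d ≠ 0 := by
    rintro rfl
    exact hd ⟨fun k => 1/(k+1), fun _ => 0, fun k => by positivity,
      tendsto_one_div_add_atTop_nhds_zero_nat, tendsto_const_nhds,
      fun k => by simpa using hxb⟩
  have hdn : (0:ℝ) < ‖d‖ := norm_pos_iff.mpr hd0
  have key : ∃ ρ > (0:ℝ), ∃ δ > (0:ℝ), {x ∈ C | x - xb ∈ dirNbhd d ρ δ} = {xb} := by
    by_contra h
    push_neg at h
    have hx0 : ∀ ρ δ : ℝ, (0:ℝ) < ρ → 0 < δ → xb ∈ {x ∈ C | x - xb ∈ dirNbhd d ρ δ} := by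
      intro ρ δ hρ hδ
      refine ⟨hxb, ?_, ?_⟩ <;> simp [sub_self]
      exact hδ.le
    have hex : ∀ k : ℕ, ∃ x, (x ∈ C ∧ x - xb ∈ dirNbhd d (1/(k+1)) (1/(k+1))) ∧ x ≠ xb := by
      intro k
      have hne := h (1/(k+1)) (by positivity) (1/(k+1)) (by positivity)
      by_contra hc
      push_neg at hc
      apply hne
      ext x
      simp only [mem_setOf_eq, mem_singleton_iff]
      constructor
      · rintro ⟨hxC, hxV⟩
        exact hc x ⟨hxC, hxV⟩
      · rintro rfl
        exact hx0 _ _ (by positivity) (by positivity)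
    choose x hx hxne using hex
    set w : ℕ → EuclideanSpace ℝ (Fin n) := fun k => x k - xb with hw
    have hw0 : ∀ k, w k ≠ 0 := fun k => sub_ne_zero.mpr (hxne k)
    have hwn : ∀ k, (0:ℝ) < ‖w k‖ := fun k => norm_pos_iff.mpr (hw0 k)
    have hwle : ∀ k : ℕ, ‖w k‖ ≤ 1/(k+1) := fun k => (hx k).2.1
    have hV : ∀ k : ℕ, ‖‖d‖ • w k - ‖w k‖ • d‖ ≤ (1/(k+1)) * ‖w k‖ * ‖d‖ := fun k => (hx k).2.2
    set t : ℕ → ℝ := fun k => ‖w k‖ / ‖d‖ with ht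
    set dk : ℕ → EuclideanSpace ℝ (Fin n) := fun k => (‖d‖ / ‖w k‖) • w k with hdk
    have htpos : ∀ k, 0 < t k := fun k => div_pos (hwn k) hdn
    have htt : Tendsto t atTop (nhds 0) := by
      have h1 : Tendsto (fun k : ℕ => (1/(k+1) : ℝ) / ‖d‖) atTop (nhds 0) := by
        simpa using tendsto_one_div_add_atTop_nhds_zero_nat.div_const ‖d‖
      refine squeeze_zero (fun k => (htpos k).le) (fun k => ?_) h1
      show ‖w k‖ / ‖d‖ ≤ (1/(k+1)) / ‖d‖
      gcongr
      exact hwle k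
    have hdkt : Tendsto dk atTop (nhds d) := by
      rw [tendsto_iff_norm_sub_tendsto_zero]
      have h1 : Tendsto (fun k : ℕ => (1/(k+1) : ℝ) * ‖d‖) atTop (nhds 0) := by
        simpa using tendsto_one_div_add_atTop_nhds_zero_nat.mul_const ‖d‖
      refine squeeze_zero (fun k => norm_nonneg _) (fun k => ?_) h1
      have heq : dk k - d = (1 / ‖w k‖) • (‖d‖ • w k - ‖w k‖ • d) := by
        rw [smul_sub, smul_smul, smul_smul, one_div, inv_mul_cancel₀ (hwn k).ne',
          one_smul, inv_mul_eq_div]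
      rw [heq, norm_smul]
      have : |1 / ‖w k‖| = 1 / ‖w k‖ := abs_of_pos (one_div_pos.mpr (hwn k))
      rw [Real.norm_eq_abs, this]
      calc (1 / ‖w k‖) * ‖‖d‖ • w k - ‖w k‖ • d‖
          ≤ (1 / ‖w k‖) * ((1/(k+1)) * ‖w k‖ * ‖d‖) := by
            exact mul_le_mul_of_nonneg_left (hV k) (one_div_nonneg.mpr (norm_nonneg _))
        _ = (1/(k+1)) * ‖d‖ := by
            have hk : ((k:ℝ)+1) ≠ 0 := by positivity
            field_simp
            exact div_self (hwn k).ne'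
    apply hd
    refine ⟨t, dk, htpos, htt, hdkt, fun k => ?_⟩
    have : t k • dk k = w k := by
      rw [hdk, smul_smul]
      have : t k * (‖d‖ / ‖w k‖) = 1 := by
        rw [ht]
        field_simp [(hwn k).ne', hdn.ne']
      rw [this, one_smul]
    rw [this]
    simpa [hw] using (hx k).1
  refine ⟨key, fun f hf => ?_⟩
  obtain ⟨ρ, hρ, δ, hδ, hset⟩ := key
  refine ⟨ρ, hρ, δ, hδ, fun y hyC hyV => ?_⟩
  have : y ∈ {x ∈ C | x - xb ∈ dirNbhd d ρ δ} := ⟨hyC, hyV⟩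
  rw [hset] at this
  simp only [mem_singleton_iff] at this
  subst this
  exact le_refl _
end
end

section
/- Let f : ℝⁿ → ℝ be twice continuously differentiable, C ⊆ ℝⁿ closed, x̄ ∈ C, d ∈ T_C(x̄), x̄ a local optimal solution of min f over C in direction d, and ∇f(x̄)·d = 0. Then ∇f(x̄)·v ≥ 0 for all v ∈ T''_C(x̄; d), and ∇f(x̄)·w + ∇²f(x̄)(d,d) ≥ 0 for all w ∈ T²_C(x̄; d). -/
open Filter Topology Set
open scoped RealInnerProductSpace

noncomputable section

variable {E : Type*} [NormedAddCommGroup E] [InnerProductSpace ℝ E]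

/-! ### Auxiliary lemmas -/

open Asymptotics in
/-- Quantitative second-order Taylor bound for a twice differentiable function. -/
lemma taylor2_aux {F : Type*} [NormedAddCommGroup F] [NormedSpace ℝ F]
    (f : F → ℝ) (x : F) (hdf : Differentiable ℝ f)
    (hB : HasFDerivAt (fderiv ℝ f) (fderiv ℝ (fderiv ℝ f) x) x)
    {ε : ℝ} (hε : 0 < ε) :
    ∃ δ > 0, ∀ h : F, ‖h‖ ≤ δ →
      |f (x + h) - f x - fderiv ℝ f x h - (1/2) * fderiv ℝ (fderiv ℝ f) x h h| ≤ ε * ‖h‖^2 := by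
  set L := fderiv ℝ f x with hLdef
  set B := fderiv ℝ (fderiv ℝ f) x with hBdef
  have hsymm : ∀ v w, B v w = B w v :=
    second_derivative_symmetric (fun y => (hdf y).hasFDerivAt) hB
  have hlo := hasFDerivAt_iff_isLittleO_nhds_zero.1 hB
  rw [isLittleO_iff] at hlo
  have hev := hlo hε
  rw [Metric.eventually_nhds_iff] at hev
  obtain ⟨δ₁, hδ₁, hball⟩ := hev
  refine ⟨δ₁/2, by linarith, fun h hh => ?_⟩
  set s := Metric.closedBall x ‖h‖ with hsdef
  have hg : ∀ y : F, HasFDerivAt (fun y => f y - L (y - x) - (1/2) * B (y-x) (y-x))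
      (fderiv ℝ f y - L - B (y - x)) y := by
    intro y
    have h1 : HasFDerivAt f (fderiv ℝ f y) y := (hdf y).hasFDerivAt
    have h2 : HasFDerivAt (fun y => L (y - x)) L y := by
      simpa only [map_sub] using (L.hasFDerivAt (x := y)).sub_const (L x)
    have h3 : HasFDerivAt (fun y => B (y - x)) B y := by
      simpa only [map_sub] using (B.hasFDerivAt (x := y)).sub_const (B x)
    have h4 : HasFDerivAt (fun y : F => y - x) (ContinuousLinearMap.id ℝ F) y :=
      (hasFDerivAt_id y).sub_const x
    have h5 := h3.clm_apply h4
    have h6 := h5.const_mul (1/2 : ℝ)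
    have h7 := (h1.sub h2).sub h6
    convert h7 using 1
    · rfl
    · rfl
    · rfl
    ext v
    simp only [ContinuousLinearMap.coe_sub', Pi.sub_apply, ContinuousLinearMap.add_apply,
      ContinuousLinearMap.coe_comp', Function.comp_apply, ContinuousLinearMap.coe_id',
      id_eq, ContinuousLinearMap.flip_apply, ContinuousLinearMap.coe_smul', Pi.smul_apply,
      smul_eq_mul, ContinuousLinearMap.smul_apply]
    rw [hsymm v (y - x)]
    ring
  have hbound : ∀ y ∈ s, ‖fderiv ℝ f y - L - B (y - x)‖ ≤ ε * ‖h‖ := by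
    intro y hy
    have hyx : ‖y - x‖ ≤ ‖h‖ := by
      rw [Metric.mem_closedBall, dist_eq_norm] at hy; exact hy
    have hlt : dist (y - x) 0 < δ₁ := by
      rw [dist_zero_right]
      calc ‖y - x‖ ≤ ‖h‖ := hyx
        _ ≤ δ₁/2 := hh
        _ < δ₁ := by linarith
    have := hball hlt
    rw [add_sub_cancel] at this
    calc ‖fderiv ℝ f y - L - B (y - x)‖ ≤ ε * ‖y - x‖ := this
      _ ≤ ε * ‖h‖ := by nlinarith [norm_nonneg (y - x)]
  have hx1 : x ∈ s := Metric.mem_closedBall_self (norm_nonneg h)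
  have hx2 : x + h ∈ s := by
    simp only [hsdef, Metric.mem_closedBall, dist_eq_norm, add_sub_cancel_left, le_refl]
  have key := Convex.norm_image_sub_le_of_norm_hasFDerivWithin_le
    (fun y (hy : y ∈ s) => (hg y).hasFDerivWithinAt) hbound (convex_closedBall x ‖h‖)
    hx1 hx2
  simp only [add_sub_cancel_left, sub_self, map_zero, mul_zero, sub_zero] at key
  rw [Real.norm_eq_abs] at key
  calc |f (x + h) - f x - L h - 1/2 * B h h| ≤ ε * ‖h‖ * ‖h‖ := by
        convert key using 2; ring
    _ = ε * ‖h‖^2 := by ring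

open Asymptotics in
lemma eventually_taylor {F : Type*} [NormedAddCommGroup F] [NormedSpace ℝ F]
    (f : F → ℝ) (x : F) (hdf : Differentiable ℝ f)
    (hB : HasFDerivAt (fderiv ℝ f) (fderiv ℝ (fderiv ℝ f) x) x)
    {h : ℕ → F} (hh : Tendsto h atTop (𝓝 0)) {ε : ℝ} (hε : 0 < ε) :
    ∀ᶠ k in atTop, |f (x + h k) - f x - fderiv ℝ f x (h k)
      - (1/2) * fderiv ℝ (fderiv ℝ f) x (h k) (h k)| ≤ ε * ‖h k‖^2 := by
  obtain ⟨δA, hδA, hT⟩ := taylor2_aux f x hdf hB hε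
  have h1 : Tendsto (fun k => ‖h k‖) atTop (𝓝 0) := by simpa using hh.norm
  filter_upwards [h1.eventually_lt_const hδA] with k hk
  exact hT _ hk.le

lemma eventually_mem_dirNbhd (d : E) {ρ δ : ℝ} (hρ : 0 < ρ) (hδ : 0 < δ) {t : ℕ → ℝ}
    {e : ℕ → E} (ht : ∀ k, 0 < t k) (ht0 : Tendsto t atTop (𝓝 0))
    (he : Tendsto e atTop (𝓝 0)) :
    ∀ᶠ k in atTop, t k • (d + e k) ∈ dirNbhd d ρ δ := by
  have hlim : Tendsto (fun k => t k • (d + e k)) atTop (𝓝 0) := by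
    have h1 := ht0.smul ((tendsto_const_nhds (x := d)).add he)
    simpa using h1
  have E1 : ∀ᶠ k in atTop, ‖t k • (d + e k)‖ ≤ δ := by
    have h1 : Tendsto (fun k => ‖t k • (d + e k)‖) atTop (𝓝 0) := by
      simpa using hlim.norm
    exact (h1.eventually_lt_const hδ).mono fun k hk => hk.le
  by_cases hd0 : d = 0
  · filter_upwards [E1] with k h1
    exact ⟨h1, by simp [hd0]⟩
  · have hdpos : 0 < ‖d‖ := norm_pos_iff.2 hd0
    have hc : 0 < ρ * ‖d‖ / (2 + ρ) := by positivity
    have E2 : ∀ᶠ k in atTop, ‖e k‖ ≤ ρ * ‖d‖ / (2 + ρ) := by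
      have h1 : Tendsto (fun k => ‖e k‖) atTop (𝓝 0) := by simpa using he.norm
      exact (h1.eventually_lt_const hc).mono fun k hk => hk.le
    filter_upwards [E1, E2] with k h1 h2
    refine ⟨h1, ?_⟩
    have htk := ht k
    have hnorm : ‖t k • (d + e k)‖ = t k * ‖d + e k‖ := by
      rw [norm_smul, Real.norm_eq_abs, abs_of_pos htk]
    have habs : |‖d‖ - ‖d + e k‖| ≤ ‖e k‖ := by
      have h3 := abs_norm_sub_norm_le d (d + e k)
      have h4 : d - (d + e k) = -e k := by abel
      rwa [h4, norm_neg] at h3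
    have h5 : (2 + ρ) * ‖e k‖ ≤ ρ * ‖d‖ := by
      rw [le_div_iff₀ (by linarith : (0:ℝ) < 2 + ρ)] at h2
      linarith
    have key : ‖‖d‖ • (d + e k) - ‖d + e k‖ • d‖ ≤ ρ * ‖d + e k‖ * ‖d‖ := by
      have ha : ‖d‖ • (d + e k) - ‖d + e k‖ • d = ‖d‖ • e k + (‖d‖ - ‖d + e k‖) • d := by
        rw [smul_add, sub_smul]; abel
      have hb : ‖‖d‖ • e k + (‖d‖ - ‖d + e k‖) • d‖ ≤ ‖d‖ * ‖e k‖ + ‖e k‖ * ‖d‖ := by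
        refine (norm_add_le _ _).trans ?_
        rw [norm_smul, norm_smul, Real.norm_eq_abs, Real.norm_eq_abs,
          abs_of_nonneg (norm_nonneg d)]
        have := mul_le_mul_of_nonneg_right habs (norm_nonneg d)
        linarith
      have hd4 : ‖d‖ - ‖e k‖ ≤ ‖d + e k‖ := by
        have h6 := abs_le.1 habs
        linarith [h6.1, h6.2]
      rw [ha]
      refine hb.trans ?_
      nlinarith [mul_le_mul_of_nonneg_right (mul_le_mul_of_nonneg_left hd4 hρ.le) (norm_nonneg d),
        mul_le_mul_of_nonneg_right h5 (norm_nonneg d), norm_nonneg (e k)]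
    calc ‖‖d‖ • (t k • (d + e k)) - ‖t k • (d + e k)‖ • d‖
        = ‖t k • (‖d‖ • (d + e k) - ‖d + e k‖ • d)‖ := by
          rw [hnorm, smul_sub, smul_comm (t k) (‖d‖ : ℝ), mul_smul]
      _ = t k * ‖‖d‖ • (d + e k) - ‖d + e k‖ • d‖ := by
          rw [norm_smul, Real.norm_eq_abs, abs_of_pos htk]
      _ ≤ t k * (ρ * ‖d + e k‖ * ‖d‖) := mul_le_mul_of_nonneg_left key htk.le
      _ = ρ * (t k * ‖d + e k‖) * ‖d‖ := by ring
      _ = ρ * ‖t k • (d + e k)‖ * ‖d‖ := by rw [hnorm]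

set_option maxHeartbeats 1000000 in
theorem stmt14 {n : ℕ} (f : EuclideanSpace ℝ (Fin n) → ℝ) (hf : ContDiff ℝ 2 f)
    (C : Set (EuclideanSpace ℝ (Fin n))) (hC : IsClosed C)
    (xb : EuclideanSpace ℝ (Fin n)) (hxb : xb ∈ C)
    (d : EuclideanSpace ℝ (Fin n)) (hd : d ∈ tangentConeB C xb)
    (hopt : ∃ ρ > (0:ℝ), ∃ δ > (0:ℝ), ∀ x ∈ C, x - xb ∈ dirNbhd d ρ δ → f xb ≤ f x)
    (hcrit : fderiv ℝ f xb d = 0) :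
    (∀ v ∈ asympTangent C xb d, 0 ≤ fderiv ℝ f xb v) ∧
    (∀ w ∈ secondTangent C xb d,
      0 ≤ fderiv ℝ f xb w + (fderiv ℝ (fderiv ℝ f) xb d) d) := by
  obtain ⟨ρ, hρ, δ, hδ, hopt⟩ := hopt
  have hdf : Differentiable ℝ f := hf.differentiable (by norm_num)
  have hB : HasFDerivAt (fderiv ℝ f) (fderiv ℝ (fderiv ℝ f) xb) xb := by
    have h1 : ContDiff ℝ 1 (fderiv ℝ f) := hf.fderiv_right (by norm_num)
    exact ((h1.differentiable (by norm_num)) xb).hasFDerivAt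
  constructor
  · -- asymptotic second-order tangent cone
    rintro v ⟨t, r, wk, ht, hr, ht0, hr0, htr, hwk, hmemC⟩
    have hfac : ∀ k, t k • d + ((1/2 : ℝ) * t k * r k) • wk k
        = t k • (d + ((1/2 : ℝ) * r k) • wk k) := by
      intro k
      rw [smul_add, smul_smul]
      congr 2
      ring
    have he0 : Tendsto (fun k => ((1/2 : ℝ) * r k) • wk k) atTop (𝓝 0) := by
      have h1 := (hr0.const_mul (1/2 : ℝ)).smul hwk
      simpa using h1
    have hhten : Tendsto (fun k => t k • d + ((1/2 : ℝ) * t k * r k) • wk k) atTop (𝓝 0) := by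
      have h2 : (fun k => t k • d + ((1/2 : ℝ) * t k * r k) • wk k)
          = fun k => t k • (d + ((1/2 : ℝ) * r k) • wk k) := funext hfac
      rw [h2]
      have h1 := ht0.smul ((tendsto_const_nhds (x := d)).add he0)
      simpa using h1
    have hEopt : ∀ᶠ k in atTop,
        0 ≤ f (xb + (t k • d + ((1/2 : ℝ) * t k * r k) • wk k)) - f xb := by
      filter_upwards [eventually_mem_dirNbhd d hρ hδ ht ht0 he0] with k hk
      have hmk : xb + (t k • d + ((1/2 : ℝ) * t k * r k) • wk k) ∈ C := by
        rw [← add_assoc]; exact hmemC k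
      have h3 : xb + (t k • d + ((1/2 : ℝ) * t k * r k) • wk k) - xb ∈ dirNbhd d ρ δ := by
        rw [add_sub_cancel_left, hfac k]; exact hk
      linarith [hopt _ hmk h3]
    have hTay := eventually_taylor f xb hdf hB hhten one_pos
    have hnb : ∀ᶠ k in atTop, ‖d + ((1/2 : ℝ) * r k) • wk k‖ ≤ ‖d‖ + 1 := by
      have h1 : Tendsto (fun k => ‖d + ((1/2 : ℝ) * r k) • wk k‖) atTop (𝓝 ‖d‖) := by
        have := ((tendsto_const_nhds (x := d)).add he0).norm
        simpa using this
      exact (h1.eventually_lt_const (by linarith : ‖d‖ < ‖d‖ + 1)).mono fun k hk => hk.le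
    set B := fderiv ℝ (fderiv ℝ f) xb with hBdef
    set M : ℝ := 1 + ‖B‖ / 2 with hMdef
    have hM : 0 < M := by positivity
    have hq : Tendsto (fun k =>
        (f (xb + (t k • d + ((1/2 : ℝ) * t k * r k) • wk k)) - f xb)
          / ((1/2 : ℝ) * t k * r k)) atTop (𝓝 (fderiv ℝ f xb v)) := by
      have hre : ∀ k, (f (xb + (t k • d + ((1/2 : ℝ) * t k * r k) • wk k)) - f xb)
            / ((1/2 : ℝ) * t k * r k)
          = fderiv ℝ f xb (wk k)
            + (f (xb + (t k • d + ((1/2 : ℝ) * t k * r k) • wk k)) - f xb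
              - fderiv ℝ f xb (t k • d + ((1/2 : ℝ) * t k * r k) • wk k))
              / ((1/2 : ℝ) * t k * r k) := by
        intro k
        have htk := ht k; have hrk := hr k
        have hsk : ((1/2 : ℝ) * t k * r k) ≠ 0 := by positivity
        have hLh : fderiv ℝ f xb (t k • d + ((1/2 : ℝ) * t k * r k) • wk k)
            = ((1/2 : ℝ) * t k * r k) * fderiv ℝ f xb (wk k) := by
          rw [map_add, map_smul, map_smul, hcrit]
          simp [smul_eq_mul]
        rw [hLh]
        field_simp
        ring
      have h1 : Tendsto (fun k => fderiv ℝ f xb (wk k)) atTop (𝓝 (fderiv ℝ f xb v)) :=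
        ((fderiv ℝ f xb).continuous.tendsto v).comp hwk
      have h2 : Tendsto (fun k =>
          (f (xb + (t k • d + ((1/2 : ℝ) * t k * r k) • wk k)) - f xb
            - fderiv ℝ f xb (t k • d + ((1/2 : ℝ) * t k * r k) • wk k))
            / ((1/2 : ℝ) * t k * r k)) atTop (𝓝 0) := by
        apply squeeze_zero_norm' (a := fun k => (2 * M * (‖d‖ + 1)^2) * (t k / r k))
        · filter_upwards [hTay, hnb] with k hT hn
          have htk := ht k; have hrk := hr k
          have hs : (0:ℝ) < (1/2 : ℝ) * t k * r k := by positivity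
          have hhh : ‖t k • d + ((1/2 : ℝ) * t k * r k) • wk k‖ ≤ t k * (‖d‖ + 1) := by
            rw [hfac k, norm_smul, Real.norm_eq_abs, abs_of_pos htk]
            exact mul_le_mul_of_nonneg_left hn htk.le
          set h := t k • d + ((1/2 : ℝ) * t k * r k) • wk k with hhdef
          have hR : |f (xb + h) - f xb - fderiv ℝ f xb h| ≤ M * ‖h‖^2 := by
            have hBb := B.le_opNorm₂ h h
            rw [Real.norm_eq_abs] at hBb
            have e1 : f (xb + h) - f xb - fderiv ℝ f xb h
                = (f (xb + h) - f xb - fderiv ℝ f xb h - (1/2) * B h h) + (1/2) * B h h := by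
              ring
            rw [e1]
            refine (abs_add_le _ _).trans ?_
            have e2 : |(1/2 : ℝ) * B h h| ≤ (1/2) * (‖B‖ * ‖h‖ * ‖h‖) := by
              rw [abs_mul, abs_of_nonneg (by norm_num : (0:ℝ) ≤ 1/2)]
              nlinarith [hBb]
            have e3 : ‖h‖^2 = ‖h‖ * ‖h‖ := sq ‖h‖
            nlinarith [hT, e2]
          rw [Real.norm_eq_abs, abs_div, abs_of_pos hs, div_le_iff₀ hs]
          have e4 : (2 * M * (‖d‖ + 1)^2) * (t k / r k) * ((1/2 : ℝ) * t k * r k)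
              = M * (t k * (‖d‖ + 1))^2 := by
            field_simp
          rw [e4]
          calc |f (xb + h) - f xb - fderiv ℝ f xb h| ≤ M * ‖h‖^2 := hR
            _ ≤ M * (t k * (‖d‖ + 1))^2 := by
                have := pow_le_pow_left₀ (norm_nonneg h) hhh 2
                nlinarith
        · have := htr.const_mul (2 * M * (‖d‖ + 1)^2)
          simpa using this
      have h3 := h1.add h2
      rw [add_zero] at h3
      have h4 : (fun k => (f (xb + (t k • d + ((1/2 : ℝ) * t k * r k) • wk k)) - f xb)
            / ((1/2 : ℝ) * t k * r k))
          = fun k => fderiv ℝ f xb (wk k)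
            + (f (xb + (t k • d + ((1/2 : ℝ) * t k * r k) • wk k)) - f xb
              - fderiv ℝ f xb (t k • d + ((1/2 : ℝ) * t k * r k) • wk k))
              / ((1/2 : ℝ) * t k * r k) := funext hre
      rw [h4]
      exact h3
    refine ge_of_tendsto hq ?_
    filter_upwards [hEopt] with k hk
    have htk := ht k; have hrk := hr k
    exact div_nonneg hk (by positivity)
  · -- outer second-order tangent set
    rintro w ⟨t, wk, ht, ht0, hwk, hmemC⟩
    set B := fderiv ℝ (fderiv ℝ f) xb with hBdef
    have hfac : ∀ k, t k • d + ((1/2 : ℝ) * t k ^ 2) • wk k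
        = t k • (d + ((1/2 : ℝ) * t k) • wk k) := by
      intro k
      rw [smul_add, smul_smul]
      congr 2
      ring
    have he0 : Tendsto (fun k => ((1/2 : ℝ) * t k) • wk k) atTop (𝓝 0) := by
      have h1 := (ht0.const_mul (1/2 : ℝ)).smul hwk
      simpa using h1
    have hhten : Tendsto (fun k => t k • d + ((1/2 : ℝ) * t k ^ 2) • wk k) atTop (𝓝 0) := by
      have h2 : (fun k => t k • d + ((1/2 : ℝ) * t k ^ 2) • wk k)
          = fun k => t k • (d + ((1/2 : ℝ) * t k) • wk k) := funext hfac
      rw [h2]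
      have h1 := ht0.smul ((tendsto_const_nhds (x := d)).add he0)
      simpa using h1
    have hEopt : ∀ᶠ k in atTop,
        0 ≤ f (xb + (t k • d + ((1/2 : ℝ) * t k ^ 2) • wk k)) - f xb := by
      filter_upwards [eventually_mem_dirNbhd d hρ hδ ht ht0 he0] with k hk
      have hmk : xb + (t k • d + ((1/2 : ℝ) * t k ^ 2) • wk k) ∈ C := by
        rw [← add_assoc]; exact hmemC k
      have h3 : xb + (t k • d + ((1/2 : ℝ) * t k ^ 2) • wk k) - xb ∈ dirNbhd d ρ δ := by
        rw [add_sub_cancel_left, hfac k]; exact hk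
      linarith [hopt _ hmk h3]
    have hnb : ∀ᶠ k in atTop, ‖d + ((1/2 : ℝ) * t k) • wk k‖ ≤ ‖d‖ + 1 := by
      have h1 : Tendsto (fun k => ‖d + ((1/2 : ℝ) * t k) • wk k‖) atTop (𝓝 ‖d‖) := by
        have := ((tendsto_const_nhds (x := d)).add he0).norm
        simpa using this
      exact (h1.eventually_lt_const (by linarith : ‖d‖ < ‖d‖ + 1)).mono fun k hk => hk.le
    have hq : Tendsto (fun k =>
        (f (xb + (t k • d + ((1/2 : ℝ) * t k ^ 2) • wk k)) - f xb)
          / ((1/2 : ℝ) * t k ^ 2)) atTop (𝓝 (fderiv ℝ f xb w + B d d)) := by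
      have hre : ∀ k, (f (xb + (t k • d + ((1/2 : ℝ) * t k ^ 2) • wk k)) - f xb)
            / ((1/2 : ℝ) * t k ^ 2)
          = fderiv ℝ f xb (wk k)
            + (B d d + (t k / 2) * (B d (wk k) + B (wk k) d)
               + (t k ^ 2 / 4) * B (wk k) (wk k))
            + (f (xb + (t k • d + ((1/2 : ℝ) * t k ^ 2) • wk k)) - f xb
              - fderiv ℝ f xb (t k • d + ((1/2 : ℝ) * t k ^ 2) • wk k)
              - (1/2) * B (t k • d + ((1/2 : ℝ) * t k ^ 2) • wk k)
                  (t k • d + ((1/2 : ℝ) * t k ^ 2) • wk k))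
              / ((1/2 : ℝ) * t k ^ 2) := by
        intro k
        have htk := ht k
        have htne : t k ≠ 0 := htk.ne'
        have hLh : fderiv ℝ f xb (t k • d + ((1/2 : ℝ) * t k ^ 2) • wk k)
            = ((1/2 : ℝ) * t k ^ 2) * fderiv ℝ f xb (wk k) := by
          rw [map_add, map_smul, map_smul, hcrit]
          simp [smul_eq_mul]
        have hBexp : B (t k • d + ((1/2 : ℝ) * t k ^ 2) • wk k)
              (t k • d + ((1/2 : ℝ) * t k ^ 2) • wk k)
            = t k * t k * B d d + t k * ((1/2 : ℝ) * t k ^ 2) * B d (wk k)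
              + ((1/2 : ℝ) * t k ^ 2) * t k * B (wk k) d
              + ((1/2 : ℝ) * t k ^ 2) * ((1/2 : ℝ) * t k ^ 2) * B (wk k) (wk k) := by
          simp only [ContinuousLinearMap.map_add, ContinuousLinearMap.map_smul,
            ContinuousLinearMap.add_apply, ContinuousLinearMap.smul_apply, smul_eq_mul]
          ring
        rw [hLh, hBexp]
        field_simp
        ring
      have h4 : (fun k => (f (xb + (t k • d + ((1/2 : ℝ) * t k ^ 2) • wk k)) - f xb)
            / ((1/2 : ℝ) * t k ^ 2)) = _ := funext hre
      rw [h4]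
      have h1 : Tendsto (fun k => fderiv ℝ f xb (wk k)) atTop (𝓝 (fderiv ℝ f xb w)) :=
        ((fderiv ℝ f xb).continuous.tendsto w).comp hwk
      have h2 : Tendsto (fun k => B d d + (t k / 2) * (B d (wk k) + B (wk k) d)
          + (t k ^ 2 / 4) * B (wk k) (wk k)) atTop (𝓝 (B d d)) := by
        have hbdw : Tendsto (fun k => B d (wk k)) atTop (𝓝 (B d w)) :=
          ((B d).continuous.tendsto w).comp hwk
        have hbwd : Tendsto (fun k => B (wk k) d) atTop (𝓝 (B w d)) := by
          have := ((B.flip d).continuous.tendsto w).comp hwk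
          simpa [ContinuousLinearMap.flip_apply, Function.comp_def] using this
        have hbww : Tendsto (fun k => B (wk k) (wk k)) atTop (𝓝 (B w w)) := by
          have hc : Continuous fun y : EuclideanSpace ℝ (Fin n) => B y y :=
            B.continuous₂.comp (continuous_id.prodMk continuous_id)
          exact (hc.tendsto w).comp hwk
        have ha : Tendsto (fun k => (t k / 2) * (B d (wk k) + B (wk k) d)) atTop (𝓝 0) := by
          have := (ht0.div_const 2).mul (hbdw.add hbwd)
          simpa using this
        have hb : Tendsto (fun k => (t k ^ 2 / 4) * B (wk k) (wk k)) atTop (𝓝 0) := by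
          have := ((ht0.pow 2).div_const 4).mul hbww
          simpa using this
        have := (tendsto_const_nhds (x := B d d)).add (ha.add hb)
        simpa [add_assoc] using this
      have h3 : Tendsto (fun k =>
          (f (xb + (t k • d + ((1/2 : ℝ) * t k ^ 2) • wk k)) - f xb
            - fderiv ℝ f xb (t k • d + ((1/2 : ℝ) * t k ^ 2) • wk k)
            - (1/2) * B (t k • d + ((1/2 : ℝ) * t k ^ 2) • wk k)
                (t k • d + ((1/2 : ℝ) * t k ^ 2) • wk k))
            / ((1/2 : ℝ) * t k ^ 2)) atTop (𝓝 0) := by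
        rw [NormedAddCommGroup.tendsto_nhds_zero]
        intro ε hε
        have hεp : (0:ℝ) < ε / (2 * (‖d‖ + 1)^2 + 1) := by positivity
        have hT := eventually_taylor f xb hdf hB hhten hεp
        filter_upwards [hT, hnb] with k hTk hnk
        have htk := ht k
        have hs : (0:ℝ) < (1/2 : ℝ) * t k ^ 2 := by positivity
        have hhh : ‖t k • d + ((1/2 : ℝ) * t k ^ 2) • wk k‖ ≤ t k * (‖d‖ + 1) := by
          rw [hfac k, norm_smul, Real.norm_eq_abs, abs_of_pos htk]
          exact mul_le_mul_of_nonneg_left hnk htk.le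
        rw [Real.norm_eq_abs, abs_div, abs_of_pos hs, div_lt_iff₀ hs]
        have h6 : |f (xb + (t k • d + ((1/2 : ℝ) * t k ^ 2) • wk k)) - f xb
              - fderiv ℝ f xb (t k • d + ((1/2 : ℝ) * t k ^ 2) • wk k)
              - (1/2) * B (t k • d + ((1/2 : ℝ) * t k ^ 2) • wk k)
                  (t k • d + ((1/2 : ℝ) * t k ^ 2) • wk k)|
            ≤ (ε / (2 * (‖d‖ + 1)^2 + 1)) * (t k * (‖d‖ + 1))^2 := by
          refine hTk.trans ?_
          have := pow_le_pow_left₀ (norm_nonneg _) hhh 2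
          nlinarith
        have h7 : (ε / (2 * (‖d‖ + 1)^2 + 1)) * (2 * (‖d‖ + 1)^2 + 1) = ε := by
          field_simp
        nlinarith [h6, hεp, mul_pos (mul_pos hεp htk) htk, sq_nonneg (‖d‖ + 1),
          mul_pos htk htk]
      have := (h1.add h2).add h3
      rw [add_zero] at this
      exact this
    refine ge_of_tendsto hq ?_
    filter_upwards [hEopt] with k hk
    have htk := ht k
    exact div_nonneg hk (by positivity)
end
end

section
/- Let f : ℝⁿ → ℝ and g : ℝⁿ → ℝᵐ be twice continuously differentiable, K ⊆ ℝᵐ closed, C = g⁻¹(K), x̄ ∈ C, d ∈ T_C(x̄), and suppose x̄ is a local optimal solution of min f subject to g(x) ∈ K in direction d with ∇f(x̄)·d = 0. Then for every λ ∈ ℝᵐ with ∇f(x̄) + ∇g(x̄)ᵀλ = 0: (i) σ_Θ(λ) ≤ 0 where Θ = ∇g(x̄)(T''_C(x̄; d)); and (ii) ∇²_{xx}L(x̄,λ)(d,d) − σ_Ω(λ) = inf{∇f(x̄)·w + ∇²f(x̄)(d,d) : w ∈ T²_C(x̄; d)} ≥ 0, where Ω = ∇g(x̄)(T²_C(x̄;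 d)) + ∇²g(x̄)(d,d) and L(x,λ) = f(x) + ⟨λ, g(x)⟩. -/
open Filter Topology Set
open scoped RealInnerProductSpace

noncomputable section

variable {E : Type*} [NormedAddCommGroup E] [InnerProductSpace ℝ E]

open Asymptotics in
lemma quad_expansion {E : Type*} [NormedAddCommGroup E] [NormedSpace ℝ E]
    (f : E → ℝ) (hf : ContDiff ℝ 2 f) (x : E) :
    (fun h => f (x + h) - f x - fderiv ℝ f x h
      - (1/2 : ℝ) * (fderiv ℝ (fderiv ℝ f) x h) h) =o[𝓝 0] fun h => ‖h‖ ^ 2 := by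
  have hdf : Differentiable ℝ f := hf.differentiable two_ne_zero
  have hf' : ContDiff ℝ 1 (fderiv ℝ f) := hf.fderiv_right (le_refl _)
  set H := fderiv ℝ (fderiv ℝ f) x with hHdef
  have hH : HasFDerivAt (fderiv ℝ f) H x :=
    ((hf'.differentiable one_ne_zero) x).hasFDerivAt
  have hsymm : ∀ v w, H v w = H w v := hf.contDiffAt.isSymmSndFDerivAt (by simp)
  set G : E → ℝ := fun h => f (x + h) - f x - fderiv ℝ f x h
      - (1/2 : ℝ) * (H h) h with hGdef
  have hG0 : G 0 = 0 := by simp [hGdef]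
  have hG : ∀ h₀ : E, HasFDerivAt G (fderiv ℝ f (x + h₀) - fderiv ℝ f x - H h₀) h₀ := by
    intro h₀
    have A1 : HasFDerivAt (fun h : E => f (x + h)) (fderiv ℝ f (x + h₀)) h₀ := by
      have := (hdf (x + h₀)).hasFDerivAt.comp h₀ ((hasFDerivAt_id h₀).const_add x)
      simpa [Function.comp_def] using this
    have A3 : HasFDerivAt (fun h : E => fderiv ℝ f x h) (fderiv ℝ f x) h₀ :=
      (fderiv ℝ f x).hasFDerivAt
    have A4 : HasFDerivAt (fun h : E => (1/2 : ℝ) * (H h) h) (H h₀) h₀ := by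
      have hq : HasFDerivAt (fun h : E => (H h) h)
          ((H h₀).comp (ContinuousLinearMap.id ℝ E) + H.flip h₀) h₀ :=
        H.hasFDerivAt.clm_apply (hasFDerivAt_id h₀)
      have := hq.const_mul (1/2 : ℝ)
      refine this.congr_fderiv ?_
      ext v
      simp [ContinuousLinearMap.smul_apply, hsymm v h₀]
      ring
    have := ((A1.sub_const (f x)).sub A3).sub A4
    exact this
  rw [isLittleO_iff]
  intro ε εpos
  have h1 : (fun h : E => fderiv ℝ f (x + h) - fderiv ℝ f x - H h) =o[𝓝 0] fun h => h :=
    hasFDerivAt_iff_isLittleO_nhds_zero.1 hH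
  have h2 := isLittleO_iff.1 h1 εpos
  rw [Metric.eventually_nhds_iff] at h2
  obtain ⟨δ, δpos, hδ⟩ := h2
  have hball : ∀ᶠ h : E in 𝓝 0, ‖h‖ < δ := by
    have := Metric.ball_mem_nhds (0 : E) δpos
    filter_upwards [this] with h hh
    simpa [dist_eq_norm] using hh
  filter_upwards [hball] with h hh
  have key : ‖G h - G 0‖ ≤ (ε * ‖h‖) * ‖h - 0‖ := by
    apply (convex_closedBall (0:E) ‖h‖).norm_image_sub_le_of_norm_hasFDerivWithin_le
      (f' := fun u => fderiv ℝ f (x + u) - fderiv ℝ f x - H u)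
      (fun u _ => (hG u).hasFDerivWithinAt) ?_
      (Metric.mem_closedBall_self (norm_nonneg h)) ?_
    · intro u hu
      have hu' : ‖u‖ ≤ ‖h‖ := by simpa [dist_eq_norm] using hu
      have : ‖fderiv ℝ f (x + u) - fderiv ℝ f x - H u‖ ≤ ε * ‖u‖ := by
        have := hδ (y := u) (by simpa [dist_eq_norm] using lt_of_le_of_lt hu' hh)
        simpa using this
      exact this.trans (by nlinarith [norm_nonneg u, norm_nonneg h, εpos.le])
    · simp [dist_eq_norm]
  rw [hG0, sub_zero, sub_zero] at key
  calc ‖G h‖ ≤ ε * ‖h‖ * ‖h‖ := key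
    _ = ε * ‖‖h‖ ^ 2‖ := by
        rw [pow_two]; rw [Real.norm_of_nonneg (by positivity : (0:ℝ) ≤ ‖h‖*‖h‖)]; ring

lemma eventually_dirNbhd (d : E) {ρ δ : ℝ} (hρ : 0 < ρ) (hδ : 0 < δ)
    {t : ℕ → ℝ} {v : ℕ → E} (ht : ∀ k, 0 < t k) (ht0 : Tendsto t atTop (𝓝 0))
    (hv : Tendsto v atTop (𝓝 d)) :
    ∀ᶠ k in atTop, t k • v k ∈ dirNbhd d ρ δ := by
  have hn : Tendsto (fun k => ‖t k • v k‖) atTop (𝓝 0) := by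
    have : Tendsto (fun k => t k • v k) atTop (𝓝 ((0:ℝ) • d)) := ht0.smul hv
    rw [zero_smul] at this
    simpa [Function.comp_def] using (continuous_norm.tendsto (0:E)).comp this
  have E1 : ∀ᶠ k in atTop, ‖t k • v k‖ ≤ δ := by
    filter_upwards [hn.eventually (eventually_le_nhds hδ)] with k hk using hk
  have E2 : ∀ᶠ k in atTop, ‖‖d‖ • v k - ‖v k‖ • d‖ ≤ ρ * ‖v k‖ * ‖d‖ := by
    rcases eq_or_ne d 0 with rfl | hd0
    · filter_upwards with k; simp
    · have hL : Tendsto (fun k => ‖‖d‖ • v k - ‖v k‖ • d‖) atTop (𝓝 0) := by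
        have : Tendsto (fun k => ‖d‖ • v k - ‖v k‖ • d) atTop
            (𝓝 (‖d‖ • d - ‖d‖ • d)) :=
          ((tendsto_const_nhds).smul hv).sub ((hv.norm).smul tendsto_const_nhds)
        rw [sub_self] at this
        simpa [Function.comp_def] using (continuous_norm.tendsto (0:E)).comp this
      have hR : Tendsto (fun k => ρ * ‖v k‖ * ‖d‖) atTop (𝓝 (ρ * ‖d‖ * ‖d‖)) :=
        ((tendsto_const_nhds.mul hv.norm).mul tendsto_const_nhds)
      have hd0' : (0:ℝ) < ‖d‖ := norm_pos_iff.2 hd0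
      have hpos : (0:ℝ) < ρ * ‖d‖ * ‖d‖ := by positivity
      filter_upwards [hL.eventually_lt hR (by simpa using hpos)] with k hk using hk.le
  filter_upwards [E1, E2] with k h1 h2
  refine ⟨h1, ?_⟩
  have htk := (ht k).le
  have key : ‖d‖ • (t k • v k) - ‖t k • v k‖ • d = t k • (‖d‖ • v k - ‖v k‖ • d) := by
    rw [norm_smul, Real.norm_of_nonneg htk, smul_sub, smul_smul, smul_smul, smul_smul,
      mul_comm (‖d‖) (t k)]
  calc ‖‖d‖ • (t k • v k) - ‖t k • v k‖ • d‖
      = t k * ‖‖d‖ • v k - ‖v k‖ • d‖ := by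
        rw [key, norm_smul, Real.norm_of_nonneg htk]
    _ ≤ t k * (ρ * ‖v k‖ * ‖d‖) := mul_le_mul_of_nonneg_left h2 htk
    _ = ρ * ‖t k • v k‖ * ‖d‖ := by rw [norm_smul, Real.norm_of_nonneg htk]; ring

open Asymptotics in
lemma secondTangent_nonneg (f : E → ℝ) (hf : ContDiff ℝ 2 f) (S : Set E) (xb d : E)
    (hopt : ∃ ρ > (0:ℝ), ∃ δ > (0:ℝ), ∀ x ∈ S, x - xb ∈ dirNbhd d ρ δ → f xb ≤ f x)
    (hcrit : fderiv ℝ f xb d = 0)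
    {w : E} (hw : w ∈ secondTangent S xb d) :
    0 ≤ fderiv ℝ f xb w + (fderiv ℝ (fderiv ℝ f) xb d) d := by
  obtain ⟨ρ, hρ, δ, hδ, hloc⟩ := hopt
  obtain ⟨t, wk, ht, ht0, hwk, hmem⟩ := hw
  set Df := fderiv ℝ f xb with hDf
  set H := fderiv ℝ (fderiv ℝ f) xb with hHd
  set v : ℕ → E := fun k => d + ((1/2 : ℝ) * t k) • wk k with hvdef
  have hv : Tendsto v atTop (𝓝 d) := by
    have h1 : Tendsto (fun k => ((1/2 : ℝ) * t k) • wk k) atTop (𝓝 (((1/2:ℝ) * 0) • w)) :=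
      (ht0.const_mul (1/2 : ℝ)).smul hwk
    rw [show ((1/2:ℝ) * 0) • w = 0 by simp] at h1
    have h2 := (tendsto_const_nhds (x := d) (f := atTop (α := ℕ))).add h1
    rwa [add_zero] at h2
  set h : ℕ → E := fun k => t k • v k with hhdef
  have hse : ∀ k, xb + h k = xb + t k • d + ((1/2 : ℝ) * t k ^ 2) • wk k := by
    intro k
    have : t k * ((1/2 : ℝ) * t k) = (1/2 : ℝ) * t k ^ 2 := by ring
    simp only [hhdef, hvdef, smul_add, smul_smul, this, add_assoc]
  have hmem' : ∀ k, xb + h k ∈ S := fun k => by rw [hse k]; exact hmem k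
  have hh0 : Tendsto h atTop (𝓝 0) := by
    have := ht0.smul hv
    rwa [zero_smul] at this
  have Φ := quad_expansion f hf xb
  set R : ℕ → ℝ := fun k =>
    f (xb + h k) - f xb - Df (h k) - (1/2 : ℝ) * (H (h k)) (h k) with hRdef
  have hR : (fun k => R k) =o[atTop] fun k => ‖h k‖ ^ 2 := Φ.comp_tendsto hh0
  have hO : (fun k => ‖h k‖ ^ 2) =O[atTop] fun k => t k ^ 2 := by
    rw [isBigO_iff]
    refine ⟨(‖d‖ + 1) ^ 2, ?_⟩
    filter_upwards [hv.norm.eventually (eventually_le_nhds (lt_add_one ‖d‖))] with k hk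
    have h1 : ‖h k‖ = t k * ‖v k‖ := by
      rw [hhdef, norm_smul, Real.norm_of_nonneg (ht k).le]
    have h2 : (0:ℝ) ≤ ‖v k‖ := norm_nonneg _
    rw [Real.norm_of_nonneg (by positivity), Real.norm_of_nonneg (by positivity), h1]
    calc (t k * ‖v k‖) ^ 2 = t k ^ 2 * ‖v k‖ ^ 2 := by ring
      _ ≤ t k ^ 2 * (‖d‖ + 1) ^ 2 :=
          mul_le_mul_of_nonneg_left (pow_le_pow_left₀ h2 hk 2) (by positivity)
      _ = (‖d‖ + 1) ^ 2 * t k ^ 2 := by ring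
  have hRdiv : Tendsto (fun k => R k / t k ^ 2) atTop (𝓝 0) :=
    (hR.trans_isBigO hO).tendsto_div_nhds_zero
  set b : ℕ → ℝ := fun k => Df (wk k) + (H (v k)) (v k) + 2 * (R k / t k ^ 2) with hbdef
  have hfd : ∀ k, f (xb + h k) - f xb = (1/2 : ℝ) * t k ^ 2 * b k := by
    intro k
    have ht2 : t k ^ 2 ≠ 0 := pow_ne_zero 2 (ht k).ne'
    have e1 : Df (h k) = (1/2 : ℝ) * t k ^ 2 * Df (wk k) := by
      simp only [hhdef, hvdef, map_smul, map_add, hcrit, smul_eq_mul]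
      ring
    have e2 : (H (h k)) (h k) = t k ^ 2 * (H (v k)) (v k) := by
      simp only [hhdef, map_smul, ContinuousLinearMap.smul_apply, smul_eq_mul]
      ring
    have e3 : R k = t k ^ 2 * (R k / t k ^ 2) := by rw [mul_div_left_comm, div_self ht2, mul_one]
    have : f (xb + h k) - f xb = Df (h k) + (1/2 : ℝ) * (H (h k)) (h k) + R k := by
      rw [hRdef]; ring
    rw [this, e1, e2, hbdef]
    simp only
    conv_lhs => rw [e3]
    ring
  have hb0 : ∀ᶠ k in atTop, 0 ≤ b k := by
    filter_upwards [eventually_dirNbhd d hρ hδ ht ht0 hv] with k hk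
    have hx : f xb ≤ f (xb + h k) := by
      apply hloc _ (hmem' k)
      simpa [hhdef] using hk
    have h2 : 0 ≤ (1/2 : ℝ) * t k ^ 2 * b k := by rw [← hfd k]; linarith
    have hpos : (0:ℝ) < (1/2 : ℝ) * t k ^ 2 := by
      have := pow_pos (ht k) 2; linarith
    have heq : b k = ((1/2 : ℝ) * t k ^ 2 * b k) / ((1/2 : ℝ) * t k ^ 2) :=
      (mul_div_cancel_left₀ (b k) hpos.ne').symm
    rw [heq]
    exact div_nonneg h2 hpos.le
  have hbl : Tendsto b atTop (𝓝 (Df w + (H d) d + 2 * 0)) := by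
    have c1 : Tendsto (fun k => Df (wk k)) atTop (𝓝 (Df w)) :=
      (Df.continuous.tendsto w).comp hwk
    have c2 : Tendsto (fun k => (H (v k)) (v k)) atTop (𝓝 ((H d) d)) := by
      have hc : Continuous fun p : (E →L[ℝ] ℝ) × E => p.1 p.2 :=
        isBoundedBilinearMap_apply.continuous
      have : Tendsto (fun k => ((H (v k), v k) : (E →L[ℝ] ℝ) × E)) atTop
          (𝓝 (H d, d)) := ((H.continuous.tendsto d).comp hv).prodMk_nhds hv
      exact (hc.tendsto (H d, d)).comp this
    exact (c1.add c2).add (hRdiv.const_mul 2)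
  rw [mul_zero, add_zero] at hbl
  exact ge_of_tendsto hbl hb0

open Asymptotics in
lemma asympTangent_nonneg (f : E → ℝ) (hf : ContDiff ℝ 2 f) (S : Set E) (xb d : E)
    (hopt : ∃ ρ > (0:ℝ), ∃ δ > (0:ℝ), ∀ x ∈ S, x - xb ∈ dirNbhd d ρ δ → f xb ≤ f x)
    (hcrit : fderiv ℝ f xb d = 0)
    {w : E} (hw : w ∈ asympTangent S xb d) :
    0 ≤ fderiv ℝ f xb w := by
  obtain ⟨ρ, hρ, δ, hδ, hloc⟩ := hopt
  obtain ⟨t, r, wk, ht, hr, ht0, hr0, htr, hwk, hmem⟩ := hw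
  set Df := fderiv ℝ f xb with hDf
  set H := fderiv ℝ (fderiv ℝ f) xb with hHd
  set v : ℕ → E := fun k => d + ((1/2 : ℝ) * r k) • wk k with hvdef
  have hv : Tendsto v atTop (𝓝 d) := by
    have h1 : Tendsto (fun k => ((1/2 : ℝ) * r k) • wk k) atTop (𝓝 (((1/2:ℝ) * 0) • w)) :=
      (hr0.const_mul (1/2 : ℝ)).smul hwk
    rw [show ((1/2:ℝ) * 0) • w = 0 by simp] at h1
    have h2 := (tendsto_const_nhds (x := d) (f := atTop (α := ℕ))).add h1
    rwa [add_zero] at h2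
  set h : ℕ → E := fun k => t k • v k with hhdef
  have hse : ∀ k, xb + h k = xb + t k • d + ((1/2 : ℝ) * t k * r k) • wk k := by
    intro k
    have : t k * ((1/2 : ℝ) * r k) = (1/2 : ℝ) * t k * r k := by ring
    simp only [hhdef, hvdef, smul_add, smul_smul, this, add_assoc]
  have hmem' : ∀ k, xb + h k ∈ S := fun k => by rw [hse k]; exact hmem k
  have hh0 : Tendsto h atTop (𝓝 0) := by
    have := ht0.smul hv
    rwa [zero_smul] at this
  have Φ := quad_expansion f hf xb
  set R : ℕ → ℝ := fun k =>
    f (xb + h k) - f xb - Df (h k) - (1/2 : ℝ) * (H (h k)) (h k) with hRdef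
  have hR : (fun k => R k) =o[atTop] fun k => ‖h k‖ ^ 2 := Φ.comp_tendsto hh0
  have hO : (fun k => ‖h k‖ ^ 2) =O[atTop] fun k => t k ^ 2 := by
    rw [isBigO_iff]
    refine ⟨(‖d‖ + 1) ^ 2, ?_⟩
    filter_upwards [hv.norm.eventually (eventually_le_nhds (lt_add_one ‖d‖))] with k hk
    have h1 : ‖h k‖ = t k * ‖v k‖ := by
      rw [hhdef, norm_smul, Real.norm_of_nonneg (ht k).le]
    have h2 : (0:ℝ) ≤ ‖v k‖ := norm_nonneg _
    rw [Real.norm_of_nonneg (by positivity), Real.norm_of_nonneg (by positivity), h1]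
    calc (t k * ‖v k‖) ^ 2 = t k ^ 2 * ‖v k‖ ^ 2 := by ring
      _ ≤ t k ^ 2 * (‖d‖ + 1) ^ 2 :=
          mul_le_mul_of_nonneg_left (pow_le_pow_left₀ h2 hk 2) (by positivity)
      _ = (‖d‖ + 1) ^ 2 * t k ^ 2 := by ring
  have hRdiv : Tendsto (fun k => R k / t k ^ 2) atTop (𝓝 0) :=
    (hR.trans_isBigO hO).tendsto_div_nhds_zero
  set b : ℕ → ℝ := fun k => Df (wk k) + (t k / r k) * (H (v k)) (v k)
      + 2 * ((R k / t k ^ 2) * (t k / r k)) with hbdef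
  have hfd : ∀ k, f (xb + h k) - f xb = (1/2 : ℝ) * t k * r k * b k := by
    intro k
    have ht2 : t k ≠ 0 := (ht k).ne'
    have hr2 : r k ≠ 0 := (hr k).ne'
    have e1 : Df (h k) = (1/2 : ℝ) * t k * r k * Df (wk k) := by
      simp only [hhdef, hvdef, map_smul, map_add, hcrit, smul_eq_mul]
      ring
    have e2 : (H (h k)) (h k) = t k ^ 2 * (H (v k)) (v k) := by
      simp only [hhdef, map_smul, ContinuousLinearMap.smul_apply, smul_eq_mul]
      ring
    have heq : f (xb + h k) - f xb = Df (h k) + (1/2 : ℝ) * (H (h k)) (h k) + R k := by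
      rw [hRdef]; ring
    rw [heq, e1, e2, hbdef]
    simp only
    field_simp
  have hb0 : ∀ᶠ k in atTop, 0 ≤ b k := by
    filter_upwards [eventually_dirNbhd d hρ hδ ht ht0 hv] with k hk
    have hx : f xb ≤ f (xb + h k) := by
      apply hloc _ (hmem' k)
      simpa [hhdef] using hk
    have h2 : 0 ≤ (1/2 : ℝ) * t k * r k * b k := by rw [← hfd k]; linarith
    have hpos : (0:ℝ) < (1/2 : ℝ) * t k * r k := by
      have := mul_pos (ht k) (hr k); linarith
    have heq : b k = ((1/2 : ℝ) * t k * r k * b k) / ((1/2 : ℝ) * t k * r k) :=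
      (mul_div_cancel_left₀ (b k) hpos.ne').symm
    rw [heq]
    exact div_nonneg h2 hpos.le
  have hbl : Tendsto b atTop (𝓝 (Df w + 0 * (H d) d + 2 * (0 * 0))) := by
    have c1 : Tendsto (fun k => Df (wk k)) atTop (𝓝 (Df w)) :=
      (Df.continuous.tendsto w).comp hwk
    have c2 : Tendsto (fun k => (H (v k)) (v k)) atTop (𝓝 ((H d) d)) := by
      have hc : Continuous fun p : (E →L[ℝ] ℝ) × E => p.1 p.2 :=
        isBoundedBilinearMap_apply.continuous
      have : Tendsto (fun k => ((H (v k), v k) : (E →L[ℝ] ℝ) × E)) atTop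
          (𝓝 (H d, d)) := ((H.continuous.tendsto d).comp hv).prodMk_nhds hv
      exact (hc.tendsto (H d, d)).comp this
    exact (c1.add (htr.mul c2)).add ((hRdiv.mul htr).const_mul 2)
  rw [zero_mul, mul_zero, mul_zero, add_zero, add_zero] at hbl
  exact ge_of_tendsto hbl hb0

lemma ereal_key {α : Type*} (S : Set α) (hS : S.Nonempty) (c : ℝ) (ψ : α → ℝ)
    (h0 : ∀ w ∈ S, 0 ≤ ψ w) :
    (c : EReal) - ⨆ w ∈ S, ((c - ψ w : ℝ) : EReal) = ⨅ w ∈ S, ((ψ w : ℝ) : EReal) := by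
  have hbddB : BddBelow (ψ '' S) := ⟨0, by rintro y ⟨u, hu, rfl⟩; exact h0 u hu⟩
  have hneI : (ψ '' S).Nonempty := hS.image ψ
  set r : ℝ := sInf (ψ '' S) with hrdef
  have hmono : Monotone Real.toEReal := EReal.coe_strictMono.monotone
  have hcont : Continuous Real.toEReal := continuous_coe_real_ereal
  have claimA : (⨅ w ∈ S, ((ψ w : ℝ) : EReal)) = (r : EReal) := by
    have h1 : (Real.toEReal) (sInf (ψ '' S)) = sInf (Real.toEReal '' (ψ '' S)) :=
      hmono.map_csInf_of_continuousAt (hcont.continuousAt) hneI hbddB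
    rw [← sInf_image (f := fun w => ((ψ w : ℝ) : EReal)) (s := S), hrdef, h1,
      ← image_comp]
    rfl
  have hub : ∀ y ∈ (fun w => c - ψ w) '' S, y ≤ c - r := by
    rintro y ⟨u, hu, rfl⟩
    have := csInf_le hbddB (mem_image_of_mem ψ hu)
    show c - ψ u ≤ c - r
    linarith [this]
  have hlub : IsLUB ((fun w => c - ψ w) '' S) (c - r) := by
    constructor
    · exact hub
    · intro u hu
      have hlb : (c - u) ∈ lowerBounds (ψ '' S) := by
        rintro y ⟨a, ha, rfl⟩
        have := hu (mem_image_of_mem _ ha)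
        linarith
      have := le_csInf hneI hlb
      linarith [this]
  have hneS : ((fun w => c - ψ w) '' S).Nonempty := hS.image _
  have hsup : sSup ((fun w => c - ψ w) '' S) = c - r := hlub.csSup_eq hneS
  have claimB : (⨆ w ∈ S, ((c - ψ w : ℝ) : EReal)) = ((c - r : ℝ) : EReal) := by
    have h1 : (Real.toEReal) (sSup ((fun w => c - ψ w) '' S)) =
        sSup (Real.toEReal '' ((fun w => c - ψ w) '' S)) :=
      hmono.map_csSup_of_continuousAt (hcont.continuousAt) hneS ⟨c - r, hub⟩
    rw [hsup] at h1
    rw [← sSup_image (f := fun w => ((c - ψ w : ℝ) : EReal)) (s := S),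
      show ((fun w => ((c - ψ w : ℝ) : EReal)) '' S)
        = Real.toEReal '' ((fun w => c - ψ w) '' S) by rw [← image_comp]; rfl]
    exact h1.symm
  rw [claimA, claimB, ← EReal.coe_sub]
  norm_num

theorem stmt15 {n m : ℕ} (f : EuclideanSpace ℝ (Fin n) → ℝ) (hf : ContDiff ℝ 2 f)
    (g : EuclideanSpace ℝ (Fin n) → EuclideanSpace ℝ (Fin m)) (hg : ContDiff ℝ 2 g)
    (K : Set (EuclideanSpace ℝ (Fin m))) (hK : IsClosed K)
    (xb : EuclideanSpace ℝ (Fin n)) (hxb : xb ∈ g ⁻¹' K)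
    (d : EuclideanSpace ℝ (Fin n)) (hd : d ∈ tangentConeB (g ⁻¹' K) xb)
    (hopt : ∃ ρ > (0:ℝ), ∃ δ > (0:ℝ), ∀ x ∈ g ⁻¹' K, x - xb ∈ dirNbhd d ρ δ → f xb ≤ f x)
    (hcrit : fderiv ℝ f xb d = 0)
    (l : EuclideanSpace ℝ (Fin m))
    (hl : ∀ u, fderiv ℝ f xb u + ⟪l, fderiv ℝ g xb u⟫ = 0) :
    suppFn (fderiv ℝ g xb '' asympTangent (g ⁻¹' K) xb d) l ≤ 0 ∧
    ((((fderiv ℝ (fderiv ℝ f) xb d) d +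
        ⟪l, (fderiv ℝ (fderiv ℝ g) xb d) d⟫ : ℝ) : EReal) -
      suppFn ((fun w => fderiv ℝ g xb w + (fderiv ℝ (fderiv ℝ g) xb d) d) ''
        secondTangent (g ⁻¹' K) xb d) l =
      ⨅ w ∈ secondTangent (g ⁻¹' K) xb d,
        (((fderiv ℝ f xb w + (fderiv ℝ (fderiv ℝ f) xb d) d : ℝ)) : EReal)) ∧
    (0 : EReal) ≤ ⨅ w ∈ secondTangent (g ⁻¹' K) xb d,
        (((fderiv ℝ f xb w + (fderiv ℝ (fderiv ℝ f) xb d) d : ℝ)) : EReal) := by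
  have hlg : ∀ u, ⟪l, fderiv ℝ g xb u⟫ = -(fderiv ℝ f xb u) := by
    intro u; have := hl u; linarith
  have hC : ∀ w ∈ secondTangent (g ⁻¹' K) xb d,
      0 ≤ fderiv ℝ f xb w + (fderiv ℝ (fderiv ℝ f) xb d) d :=
    fun w hw => secondTangent_nonneg f hf (g ⁻¹' K) xb d hopt hcrit hw
  have hD : ∀ w ∈ asympTangent (g ⁻¹' K) xb d, 0 ≤ fderiv ℝ f xb w :=
    fun w hw => asympTangent_nonneg f hf (g ⁻¹' K) xb d hopt hcrit hw
  have part3 : (0 : EReal) ≤ ⨅ w ∈ secondTangent (g ⁻¹' K) xb d,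
      (((fderiv ℝ f xb w + (fderiv ℝ (fderiv ℝ f) xb d) d : ℝ)) : EReal) := by
    refine le_iInf₂ fun w hw => ?_
    exact_mod_cast hC w hw
  refine ⟨?_, ?_, part3⟩
  · rw [suppFn, iSup_image]
    refine iSup₂_le fun w hw => ?_
    rw [hlg w]
    have := hD w hw
    exact_mod_cast neg_nonpos.2 this
  · rw [suppFn, iSup_image]
    set A : ℝ := (fderiv ℝ (fderiv ℝ f) xb d) d with hA
    set B : ℝ := ⟪l, (fderiv ℝ (fderiv ℝ g) xb d) d⟫ with hB
    have hrw : ∀ w, (⟪l, fderiv ℝ g xb w + (fderiv ℝ (fderiv ℝ g) xb d) d⟫ : ℝ)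
        = (A + B) - (fderiv ℝ f xb w + A) := by
      intro w
      rw [inner_add_right, hlg w, ← hB]
      ring
    simp only [hrw]
    rcases (secondTangent (g ⁻¹' K) xb d).eq_empty_or_nonempty with he | hne
    · rw [he]
      simp only [mem_empty_iff_false, iSup_false, iSup_bot, iInf_false, iInf_top]
      exact EReal.coe_sub_bot (A + B)
    · exact ereal_key _ hne (A + B) (fun w => fderiv ℝ f xb w + A) hC
end
end

section
/- Let f : ℝⁿ → ℝ and g : ℝⁿ → ℝᵐ be twice continuously differentiable, K ⊆ ℝᵐ closed, C = g⁻¹(K), x̄ ∈ C, and d ∈ T_C(x̄) \ {0}. Assume ∇f(x̄)·d = 0 and there exists λ ∈ ℝᵐ with ∇f(x̄) + ∇g(x̄)ᵀλ = 0 such that: (i) ⟨λ, v⟩ < 0 for all v ∈ ∇g(x̄)(T''_C(x̄; d) ∩ ({d}^⊥ \ {0})); and (ii) ∇²_{xx}L(x̄,λ)(d,d) − σ_{∇g(x̄)(T²_C(x̄;d) ∩ {d}^⊥) + ∇²g(x̄)(d,d)}(λ) > 0, where L(x,λ) = f(x) + ⟨λ,g(x)⟩. Then the second-order growth condition holds at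 x̄ in direction d: there exist κ, ρ, δ > 0 with f(x) ≥ f(x̄) + κ‖x − x̄‖² for all x ∈ C ∩ (x̄ + V_{ρ,δ}(d)). -/
open Filter Topology Set
open scoped RealInnerProductSpace

noncomputable section

variable {E : Type*} [NormedAddCommGroup E] [InnerProductSpace ℝ E]

set_option maxHeartbeats 1000000 in
lemma taylor2 {E : Type*} [NormedAddCommGroup E] [NormedSpace ℝ E] {f : E → ℝ}
    (hf : ContDiff ℝ 2 f) (x : E) :
    (fun h => f (x + h) - f x - fderiv ℝ f x h
        - (1/2 : ℝ) * fderiv ℝ (fderiv ℝ f) x h h)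
      =o[𝓝 (0 : E)] fun h => ‖h‖ ^ 2 := by
  set φ : E → (E →L[ℝ] ℝ) := fderiv ℝ f with hφdef
  set B : E →L[ℝ] (E →L[ℝ] ℝ) := fderiv ℝ φ x with hBdef
  have hfd : Differentiable ℝ f := hf.differentiable two_ne_zero
  have hφ1 : ContDiff ℝ 1 φ := hf.fderiv_right (le_refl _)
  have hφd : Differentiable ℝ φ := hφ1.differentiable one_ne_zero
  have hsymm : ∀ v w : E, B v w = B w v := fun v w =>
    (hf.contDiffAt.isSymmSndFDerivAt (by simp)).eq v w
  -- derivative of G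
  have hG : ∀ u : E, HasFDerivAt
      (fun u => f (x + u) - f x - φ x u - (1/2 : ℝ) * B u u)
      (φ (x + u) - φ x - B u) u := by
    intro u
    have h1 : HasFDerivAt (fun u => f (x + u)) (φ (x + u)) u := by
      have := (hfd (x + u)).hasFDerivAt.comp u ((hasFDerivAt_id u).const_add x)
      simp at this
      exact this
    have h2 : HasFDerivAt (fun u : E => φ x u) (φ x) u := (φ x).hasFDerivAt
    have h3 : HasFDerivAt (fun u : E => B u u) ((B u).comp (.id ℝ E) + B.flip u) u :=
      (B.hasFDerivAt).clm_apply (hasFDerivAt_id u)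
    have h4 : HasFDerivAt (fun u : E => (1/2 : ℝ) * B u u)
        ((1/2 : ℝ) • ((B u).comp (.id ℝ E) + B.flip u)) u := h3.const_mul _
    have key : (1/2 : ℝ) • ((B u).comp (.id ℝ E) + B.flip u) = B u := by
      ext k
      simp only [ContinuousLinearMap.smul_apply, ContinuousLinearMap.add_apply,
        ContinuousLinearMap.coe_comp', Function.comp_apply, ContinuousLinearMap.coe_id',
        id_eq, ContinuousLinearMap.flip_apply, smul_eq_mul]
      rw [hsymm k u]
      ring
    rw [key] at h4
    exact ((h1.sub_const (f x)).sub h2).sub h4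
  rw [Asymptotics.isLittleO_iff]
  intro ε hε
  have hB : HasFDerivAt φ B x := (hφd x).hasFDerivAt
  have hlo : (fun u => φ (x + u) - φ x - B u) =o[𝓝 (0:E)] fun u : E => u := by
    have htd : Tendsto (fun u : E => x + u) (𝓝 0) (𝓝 x) := by
      have := (continuous_add_left x).tendsto (0:E)
      rw [add_zero] at this
      exact this
    have := hB.isLittleO.comp_tendsto htd
    simp only [Function.comp_def, add_sub_cancel_left] at this
    exact this
  rw [Asymptotics.isLittleO_iff] at hlo
  have hev := hlo hε
  rw [Metric.eventually_nhds_iff] at hev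
  obtain ⟨δ, hδ, hball⟩ := hev
  rw [Metric.eventually_nhds_iff]
  refine ⟨δ, hδ, fun h hh => ?_⟩
  have hseg : ∀ u ∈ segment ℝ (0:E) h, ‖u‖ ≤ ‖h‖ := by
    intro u hu
    have := (convex_closedBall (0:E) ‖h‖).segment_subset
      (by simp) (by simp) hu
    simpa [Metric.mem_closedBall, dist_eq_norm] using this
  have hbound : ∀ u ∈ segment ℝ (0:E) h, ‖φ (x + u) - φ x - B u‖ ≤ ε * ‖h‖ := by
    intro u hu
    have h1 : dist u 0 < δ := by
      rw [dist_eq_norm, sub_zero]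
      exact lt_of_le_of_lt (hseg u hu) (by simpa [dist_eq_norm] using hh)
    have h2 : ‖φ (x + u) - φ x - B u‖ ≤ ε * ‖u‖ := by simpa using hball h1
    have h3 : ε * ‖u‖ ≤ ε * ‖h‖ := mul_le_mul_of_nonneg_left (hseg u hu) hε.le
    exact h2.trans h3
  have hmv := (convex_segment (0:E) h).norm_image_sub_le_of_norm_hasFDerivWithin_le
    (f := fun u => f (x + u) - f x - φ x u - (1/2 : ℝ) * B u u)
    (f' := fun u => φ (x + u) - φ x - B u)
    (fun u _ => (hG u).hasFDerivWithinAt) hbound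
    (left_mem_segment ℝ (0:E) h) (right_mem_segment ℝ (0:E) h)
  simp only [add_zero, map_zero, ContinuousLinearMap.zero_apply, mul_zero, sub_zero, sub_self,
    sub_zero] at hmv
  rw [Real.norm_of_nonneg (by positivity : (0:ℝ) ≤ ‖h‖ ^ 2)]
  calc ‖f (x + h) - f x - φ x h - (1/2 : ℝ) * B h h‖
      ≤ ε * ‖h‖ * ‖h‖ := hmv
    _ = ε * ‖h‖ ^ 2 := by ring

lemma ereal_helper {s : EReal} {c0 a : ℝ} (h : (0:EReal) < (a:EReal) - s)
    (hc : (c0 : EReal) ≤ s) : c0 < a := by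
  have hst : s ≠ ⊤ := by
    rintro rfl
    rw [EReal.sub_top] at h
    exact absurd h (by simp)
  have hsb : s ≠ ⊥ := by
    rintro rfl
    exact absurd hc (by simp)
  have hsr : ((s.toReal : ℝ) : EReal) = s := EReal.coe_toReal hst hsb
  rw [← hsr, ← EReal.coe_sub] at h
  rw [← hsr] at hc
  have h1 : (0:ℝ) < a - s.toReal := EReal.coe_pos.mp h
  have h2 : c0 ≤ s.toReal := EReal.coe_le_coe_iff.mp hc
  linarith

set_option maxHeartbeats 2000000 in
theorem stmt17 {n m : ℕ} (f : EuclideanSpace ℝ (Fin n) → ℝ) (hf : ContDiff ℝ 2 f)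
    (g : EuclideanSpace ℝ (Fin n) → EuclideanSpace ℝ (Fin m)) (hg : ContDiff ℝ 2 g)
    (K : Set (EuclideanSpace ℝ (Fin m))) (hK : IsClosed K)
    (xb : EuclideanSpace ℝ (Fin n)) (hxb : xb ∈ g ⁻¹' K)
    (d : EuclideanSpace ℝ (Fin n)) (hd : d ∈ tangentConeB (g ⁻¹' K) xb) (hd0 : d ≠ 0)
    (hcrit : fderiv ℝ f xb d = 0)
    (l : EuclideanSpace ℝ (Fin m))
    (hl : ∀ u, fderiv ℝ f xb u + ⟪l, fderiv ℝ g xb u⟫ = 0)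
    (h1 : ∀ v ∈ fderiv ℝ g xb ''
        (asympTangent (g ⁻¹' K) xb d ∩
          ({w : EuclideanSpace ℝ (Fin n) | ⟪w, d⟫ = 0} \ {0})),
      ⟪l, v⟫ < 0)
    (h2 : (0 : EReal) <
      (((fderiv ℝ (fderiv ℝ f) xb d) d + ⟪l, (fderiv ℝ (fderiv ℝ g) xb d) d⟫ : ℝ) : EReal) -
        suppFn ((fun w => fderiv ℝ g xb w + (fderiv ℝ (fderiv ℝ g) xb d) d) ''
          (secondTangent (g ⁻¹' K) xb d ∩
            {w : EuclideanSpace ℝ (Fin n) | ⟪w, d⟫ = 0})) l) :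
    ∃ κ > (0:ℝ), ∃ ρ > (0:ℝ), ∃ δ > (0:ℝ), ∀ x ∈ g ⁻¹' K,
      x - xb ∈ dirNbhd d ρ δ → f xb + κ * ‖x - xb‖ ^ 2 ≤ f x := by
  classical
  by_contra hcon
  push_neg at hcon
  set C : Set (EuclideanSpace ℝ (Fin n)) := g ⁻¹' K with hC
  set Df : EuclideanSpace ℝ (Fin n) →L[ℝ] ℝ := fderiv ℝ f xb with hDf
  set B := fderiv ℝ (fderiv ℝ f) xb with hBd
  have hdpos : (0:ℝ) < ‖d‖ := norm_pos_iff.mpr hd0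
  have hdn : ‖d‖ ≠ 0 := hdpos.ne'
  have key : ∀ k : ℕ, ∃ x, x ∈ C ∧ x - xb ∈ dirNbhd d (1/((k:ℝ)+1)) (1/((k:ℝ)+1)) ∧
      f x < f xb + (1/((k:ℝ)+1)) * ‖x - xb‖ ^ 2 := by
    intro k
    obtain ⟨x, hx1, hx2, hx3⟩ := hcon (1/((k:ℝ)+1)) (by positivity) (1/((k:ℝ)+1))
      (by positivity) (1/((k:ℝ)+1)) (by positivity)
    exact ⟨x, hx1, hx2, hx3⟩
  choose x hxC hxV hxf using key
  set u : ℕ → EuclideanSpace ℝ (Fin n) := fun k => x k - xb with hu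
  have hxu : ∀ k, xb + u k = x k := fun k => by simp [hu]
  have hune : ∀ k, u k ≠ 0 := by
    intro k h
    have h2 := hxf k
    have hx : x k = xb := sub_eq_zero.mp h
    rw [hx] at h2
    simp at h2
  have hunorm : ∀ k, ‖u k‖ ≤ 1/((k:ℝ)+1) := fun k => (hxV k).1
  have hV2 : ∀ k, ‖‖d‖ • u k - ‖u k‖ • d‖ ≤ (1/((k:ℝ)+1)) * ‖u k‖ * ‖d‖ := fun k => (hxV k).2
  set t : ℕ → ℝ := fun k => ‖u k‖ / ‖d‖ with htdef
  have ht : ∀ k, 0 < t k := fun k => div_pos (norm_pos_iff.mpr (hune k)) hdpos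
  have htne : ∀ k, t k ≠ 0 := fun k => (ht k).ne'
  have hut : ∀ k, ‖u k‖ = t k * ‖d‖ := fun k => by
    show ‖u k‖ = ‖u k‖ / ‖d‖ * ‖d‖
    rw [div_mul_cancel₀ _ hdn]
  set dk : ℕ → EuclideanSpace ℝ (Fin n) := fun k => (t k)⁻¹ • u k with hdkdef
  have hudk : ∀ k, u k = t k • dk k := fun k => (smul_inv_smul₀ (htne k) (u k)).symm
  have hdknorm : ∀ k, ‖dk k‖ = ‖d‖ := by
    intro k
    show ‖(t k)⁻¹ • u k‖ = ‖d‖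
    rw [norm_smul, norm_inv, Real.norm_of_nonneg (ht k).le, hut k,
      inv_mul_cancel_left₀ (htne k)]
  have htend0 : Tendsto (fun k : ℕ => 1/((k:ℝ)+1)) atTop (𝓝 0) :=
    tendsto_one_div_add_atTop_nhds_zero_nat
  have ht0 : Tendsto t atTop (𝓝 0) := by
    refine squeeze_zero (fun k => (ht k).le)
      (fun k => (div_le_div_iff_of_pos_right hdpos).mpr (hunorm k)) ?_
    simpa using htend0.div_const ‖d‖
  have hu0 : Tendsto u atTop (𝓝 0) := squeeze_zero_norm hunorm htend0
  -- dk tends to d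
  have hdkd_bound : ∀ k, ‖dk k - d‖ ≤ (1/((k:ℝ)+1)) * ‖d‖ := by
    intro k
    have h2 := hV2 k
    rw [hut k, hudk k] at h2
    have heq : ‖d‖ • (t k • dk k) - (t k * ‖d‖) • d = (t k * ‖d‖) • (dk k - d) := by
      rw [smul_smul, smul_sub, mul_comm ‖d‖ (t k)]
    rw [heq, norm_smul, Real.norm_of_nonneg (mul_nonneg (ht k).le (norm_nonneg d))] at h2
    have hpos : 0 < t k * ‖d‖ := mul_pos (ht k) hdpos
    have := (mul_le_mul_iff_right₀ hpos).mp (by linarith [h2] : t k * ‖d‖ * ‖dk k - d‖ ≤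
      t k * ‖d‖ * ((1/((k:ℝ)+1)) * ‖d‖))
    exact this
  have hdkd : Tendsto dk atTop (𝓝 d) := by
    rw [tendsto_iff_norm_sub_tendsto_zero]
    refine squeeze_zero (fun k => norm_nonneg _) hdkd_bound ?_
    simpa using htend0.mul_const ‖d‖
  -- orthogonality
  have horth : ∀ k, ⟪dk k - d, dk k + d⟫ = 0 := by
    intro k
    rw [inner_sub_left, inner_add_right, inner_add_right]
    rw [real_inner_comm d (dk k)]
    rw [real_inner_self_eq_norm_sq, real_inner_self_eq_norm_sq, hdknorm k]
    ring
  -- w sequence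
  set w : ℕ → EuclideanSpace ℝ (Fin n) := fun k => ((2:ℝ)/t k) • (dk k - d) with hwdef
  have hud2 : ∀ k, u k = t k • d + ((1/2:ℝ) * t k ^ 2) • w k := by
    intro k
    rw [hwdef]
    rw [smul_smul]
    have hsc : (1/2:ℝ) * t k ^ 2 * (2/t k) = t k := by
      field_simp [htne k]
    rw [hsc, smul_sub, hudk k]
    abel
  have hxeq : ∀ k, xb + t k • d + ((1/2:ℝ) * t k ^ 2) • w k = x k := by
    intro k
    rw [add_assoc, ← hud2 k, hxu k]
  have hworth : ∀ k, ⟪w k, dk k + d⟫ = 0 := by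
    intro k
    rw [hwdef, real_inner_smul_left, horth k, mul_zero]
  have htw : ∀ k, t k * ‖w k‖ = 2 * ‖dk k - d‖ := by
    intro k
    rw [hwdef, norm_smul, Real.norm_of_nonneg (le_of_lt (div_pos two_pos (ht k)))]
    rw [← mul_assoc, mul_comm (t k) (2 / t k), div_mul_cancel₀ (2:ℝ) (htne k)]
  -- Taylor remainder
  set R : ℕ → ℝ := fun k => f (x k) - f xb - Df (u k) - (1/2:ℝ) * B (u k) (u k) with hRdef
  have hR0 : Tendsto (fun k => R k / ‖u k‖ ^ 2) atTop (𝓝 0) := by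
    have hT := taylor2 hf xb
    have hTu := hT.comp_tendsto hu0
    have hTu' : (fun k => R k) =o[atTop] fun k => ‖u k‖ ^ 2 := by
      refine hTu.congr' ?_ (by rfl)
      filter_upwards with k
      show _ = R k
      simp only [Function.comp_apply, hRdef, hDf, hBd, hxu k]
    exact hTu'.tendsto_div_nhds_zero
  -- expansion of the quotient
  set q : ℕ → ℝ := fun k => (f (x k) - f xb) / ((1/2:ℝ) * t k ^ 2) with hqdef
  have hDfu : ∀ k, Df (u k) = (1/2:ℝ) * t k ^ 2 * Df (w k) := by
    intro k
    rw [hud2 k, map_add, map_smul, map_smul]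
    rw [hDf, hcrit]
    simp [smul_eq_mul]
  have hBu : ∀ k, B (u k) (u k) = t k ^ 2 * B (dk k) (dk k) := by
    intro k
    rw [hudk k, map_smul]
    simp only [ContinuousLinearMap.smul_apply, map_smul, smul_eq_mul]
    ring
  have hfxk : ∀ k, f (x k) - f xb =
      (1/2:ℝ) * t k ^ 2 * Df (w k) + (1/2:ℝ) * (t k ^ 2 * B (dk k) (dk k)) + R k := by
    intro k
    have : R k = f (x k) - f xb - Df (u k) - (1/2:ℝ) * B (u k) (u k) := rfl
    rw [hDfu k, hBu k] at this
    linarith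
  have hun2 : ∀ k, ‖u k‖ ^ 2 = t k ^ 2 * ‖d‖ ^ 2 := by
    intro k; rw [hut k]; ring
  have hq_eq : ∀ k, q k = Df (w k) + B (dk k) (dk k) + 2 * ‖d‖ ^ 2 * (R k / ‖u k‖ ^ 2) := by
    intro k
    have hc : ((1/2:ℝ) * t k ^ 2) ≠ 0 := by
      have := ht k; positivity
    have htd2 : t k ^ 2 * ‖d‖ ^ 2 ≠ 0 := by
      have := ht k; positivity
    have hRk : R k = (R k / (t k ^ 2 * ‖d‖ ^ 2)) * (t k ^ 2 * ‖d‖ ^ 2) :=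
      (div_mul_cancel₀ _ htd2).symm
    show (f (x k) - f xb) / ((1/2:ℝ) * t k ^ 2) = _
    rw [div_eq_iff hc, hun2 k, hfxk k]
    conv_lhs => rw [hRk]
    ring
  have hqlt : ∀ k, q k < 2 * ‖d‖ ^ 2 / ((k:ℝ)+1) := by
    intro k
    have h4 : f (x k) - f xb < (1/((k:ℝ)+1)) * (t k ^ 2 * ‖d‖ ^ 2) := by
      have h3 : f (x k) < f xb + 1/((k:ℝ)+1) * ‖u k‖ ^ 2 := hxf k
      rw [hun2 k] at h3
      linarith
    have h5 : (0:ℝ) < (1/2:ℝ) * t k ^ 2 := by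
      have := ht k; positivity
    show (f (x k) - f xb) / ((1/2:ℝ) * t k ^ 2) < _
    rw [div_lt_iff₀ h5]
    have hrw : 2 * ‖d‖ ^ 2 / ((k:ℝ)+1) * ((1/2:ℝ) * t k ^ 2)
        = (1/((k:ℝ)+1)) * (t k ^ 2 * ‖d‖ ^ 2) := by
      have hk1 : ((k:ℝ)+1) ≠ 0 := by positivity
      field_simp
    rw [hrw]
    exact h4

  have hBc : Continuous fun v : EuclideanSpace ℝ (Fin n) => B v v :=
    B.continuous.clm_apply continuous_id
  by_cases hbdd : ∃ c : ℝ, ∃ᶠ k in atTop, ‖w k‖ ≤ c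
  · -- Case A : bounded subsequence, second-order tangent set
    obtain ⟨c, hc⟩ := hbdd
    obtain ⟨φ0, hφ0m, hφ0⟩ := Filter.extraction_of_frequently_atTop hc
    have hmem : ∀ j, w (φ0 j) ∈ Metric.closedBall (0 : EuclideanSpace ℝ (Fin n)) c := by
      intro j
      rw [Metric.mem_closedBall, dist_zero_right]
      exact hφ0 j
    obtain ⟨winf, -, φ1, hφ1m, hwlim⟩ :=
      tendsto_subseq_of_bounded Metric.isBounded_closedBall hmem
    set φ : ℕ → ℕ := φ0 ∘ φ1 with hφdef
    have hφm : StrictMono φ := hφ0m.comp hφ1m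
    have hφt : Tendsto φ atTop atTop := hφm.tendsto_atTop
    have hwlim' : Tendsto (fun j => w (φ j)) atTop (𝓝 winf) := hwlim
    have hmemT : winf ∈ secondTangent C xb d :=
      ⟨fun j => t (φ j), fun j => w (φ j), fun j => ht _, ht0.comp hφt, hwlim',
        fun j => by rw [hxeq (φ j)]; exact hxC _⟩
    have horthinf : ⟪winf, d⟫ = 0 := by
      have hlim2 : Tendsto (fun j => ⟪w (φ j), dk (φ j) + d⟫) atTop (𝓝 ⟪winf, d + d⟫) :=
        hwlim'.inner ((hdkd.comp hφt).add tendsto_const_nhds)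
      have hz : (fun j => ⟪w (φ j), dk (φ j) + d⟫) = fun _ => (0:ℝ) :=
        funext fun j => hworth _
      rw [hz] at hlim2
      have h10 := tendsto_nhds_unique hlim2 tendsto_const_nhds
      rw [inner_add_right] at h10
      linarith
    have hv0 : fderiv ℝ g xb winf + (fderiv ℝ (fderiv ℝ g) xb d) d ∈
        ((fun w => fderiv ℝ g xb w + (fderiv ℝ (fderiv ℝ g) xb d) d) ''
          (secondTangent C xb d ∩ {w : EuclideanSpace ℝ (Fin n) | ⟪w, d⟫ = 0})) :=
      ⟨winf, ⟨hmemT, horthinf⟩, rfl⟩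
    have hsup_ge : ((⟪l, fderiv ℝ g xb winf + (fderiv ℝ (fderiv ℝ g) xb d) d⟫ : ℝ) : EReal) ≤
        suppFn ((fun w => fderiv ℝ g xb w + (fderiv ℝ (fderiv ℝ g) xb d) d) ''
          (secondTangent C xb d ∩ {w : EuclideanSpace ℝ (Fin n) | ⟪w, d⟫ = 0})) l := by
      rw [suppFn]
      exact le_iSup₂ (f := fun u (_ : u ∈ _) => ((⟪l, u⟫ : ℝ) : EReal)) _ hv0
    have hkey0 : ⟪l, fderiv ℝ g xb winf + (fderiv ℝ (fderiv ℝ g) xb d) d⟫ <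
        B d d + ⟪l, (fderiv ℝ (fderiv ℝ g) xb d) d⟫ := ereal_helper h2 hsup_ge
    rw [inner_add_right] at hkey0
    have hpos : 0 < Df winf + B d d := by
      have h11 := hl winf
      linarith
    have hqcomp : (fun j => q (φ j)) = fun j => Df (w (φ j)) + B (dk (φ j)) (dk (φ j))
        + 2*‖d‖^2 * (R (φ j)/‖u (φ j)‖^2) := funext fun j => hq_eq _
    have hqlim : Tendsto (fun j => q (φ j)) atTop (𝓝 (Df winf + B d d + 2*‖d‖^2 * 0)) := by
      rw [hqcomp]
      exact (((Df.continuous.tendsto _).comp hwlim').add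
        ((hBc.tendsto _).comp (hdkd.comp hφt))).add ((hR0.comp hφt).const_mul _)
    have hqle : ∀ j, q (φ j) ≤ 2*‖d‖^2 * (1/((j:ℝ)+1)) := by
      intro j
      have h6 := (hqlt (φ j)).le
      have h7 : 2*‖d‖^2/((φ j:ℝ)+1) ≤ 2*‖d‖^2 * (1/((j:ℝ)+1)) := by
        rw [div_eq_mul_one_div]
        refine mul_le_mul_of_nonneg_left ?_ (by positivity)
        refine one_div_le_one_div_of_le (by positivity) ?_
        have h8 : (j:ℝ) ≤ (φ j:ℝ) := Nat.cast_le.mpr hφm.le_apply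
        linarith
      exact h6.trans h7
    have hlim0 : Tendsto (fun j : ℕ => 2*‖d‖^2 * (1/((j:ℝ)+1))) atTop (𝓝 0) := by
      have h13 := htend0.const_mul (2*‖d‖^2)
      rw [mul_zero] at h13
      exact h13
    have hfinal := le_of_tendsto_of_tendsto' hqlim hlim0 hqle
    simp only [mul_zero, add_zero] at hfinal
    linarith
  · -- Case B : norms tend to infinity, asymptotic second-order tangent cone
    have hev : ∀ c : ℝ, ∀ᶠ k in atTop, c < ‖w k‖ := by
      intro c
      have h5 : ¬ ∃ᶠ k in atTop, ‖w k‖ ≤ c := fun h => hbdd ⟨c, h⟩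
      rw [Filter.not_frequently] at h5
      exact h5.mono fun k h => not_le.mp h
    obtain ⟨φ0, hφ0m, hφ0⟩ := Filter.extraction_forall_of_eventually
      (P := fun j k => (j:ℝ)+1 ≤ ‖w k‖) (fun j => (hev ((j:ℝ)+1)).mono fun k h => h.le)
    have hwpos : ∀ j, 0 < ‖w (φ0 j)‖ := fun j => lt_of_lt_of_le (by positivity) (hφ0 j)
    set v : ℕ → EuclideanSpace ℝ (Fin n) := fun j => ‖w (φ0 j)‖⁻¹ • w (φ0 j) with hvdef
    have hvnorm : ∀ j, ‖v j‖ = 1 := by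
      intro j
      show ‖(‖w (φ0 j)‖⁻¹ : ℝ) • w (φ0 j)‖ = 1
      rw [norm_smul, norm_inv, norm_norm, inv_mul_cancel₀ (hwpos j).ne']
    have hmem : ∀ j, v j ∈ Metric.closedBall (0 : EuclideanSpace ℝ (Fin n)) 1 := by
      intro j
      rw [Metric.mem_closedBall, dist_zero_right, hvnorm j]
    obtain ⟨winf, -, φ1, hφ1m, hvlim⟩ :=
      tendsto_subseq_of_bounded Metric.isBounded_closedBall hmem
    set φ : ℕ → ℕ := φ0 ∘ φ1 with hφdef
    have hφm : StrictMono φ := hφ0m.comp hφ1m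
    have hφt : Tendsto φ atTop atTop := hφm.tendsto_atTop
    have hvlim' : Tendsto (fun j => v (φ1 j)) atTop (𝓝 winf) := hvlim
    have hwinfnorm : ‖winf‖ = 1 := by
      have h8 : Tendsto (fun j => ‖v (φ1 j)‖) atTop (𝓝 ‖winf‖) :=
        (continuous_norm.tendsto _).comp hvlim'
      have h9 : (fun j => ‖v (φ1 j)‖) = fun _ => (1:ℝ) := funext fun j => hvnorm _
      rw [h9] at h8
      exact tendsto_nhds_unique h8 tendsto_const_nhds
    have hwne : winf ≠ 0 := by
      intro h
      rw [h, norm_zero] at hwinfnorm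
      norm_num at hwinfnorm
    have hwtop : Tendsto (fun j => ‖w (φ j)‖) atTop atTop := by
      have hlow : ∀ j : ℕ, (j:ℝ)+1 ≤ ‖w (φ j)‖ := by
        intro j
        refine le_trans ?_ (hφ0 (φ1 j))
        have : (j:ℝ) ≤ (φ1 j : ℝ) := Nat.cast_le.mpr hφ1m.le_apply
        linarith
      exact tendsto_atTop_mono hlow
        (tendsto_atTop_add_const_right _ 1 tendsto_natCast_atTop_atTop)
    set r : ℕ → ℝ := fun j => t (φ j) * ‖w (φ j)‖ with hrdef
    have hrpos : ∀ j, 0 < r j := fun j => mul_pos (ht _) (hwpos (φ1 j))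
    have hr0 : Tendsto r atTop (𝓝 0) := by
      have hre : r = fun j => 2 * ‖dk (φ j) - d‖ := funext fun j => htw (φ j)
      rw [hre]
      have h12 : Tendsto (fun j => dk (φ j) - d) atTop (𝓝 (d - d)) :=
        (hdkd.comp hφt).sub_const d
      rw [sub_self] at h12
      have h13 := h12.norm.const_mul (2:ℝ)
      rw [norm_zero, mul_zero] at h13
      exact h13
    have htr : ∀ j, t (φ j) / r j = ‖w (φ j)‖⁻¹ := by
      intro j
      show t (φ j) / (t (φ j) * ‖w (φ j)‖) = _
      rw [div_mul_eq_div_div, div_self (htne _), one_div]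
    have htr0 : Tendsto (fun j => t (φ j) / r j) atTop (𝓝 0) := by
      rw [funext htr]
      exact hwtop.inv_tendsto_atTop
    have hscal : ∀ j, ((1/2:ℝ) * t (φ j) * r j) • v (φ1 j)
        = ((1/2:ℝ) * t (φ j)^2) • w (φ j) := by
      intro j
      show ((1/2:ℝ) * t (φ j) * (t (φ j) * ‖w (φ j)‖)) • ((‖w (φ j)‖⁻¹ : ℝ) • w (φ j)) = _
      rw [smul_smul]
      congr 1
      have hwne0 : ‖w (φ j)‖ ≠ 0 := (hwpos (φ1 j)).ne'
      rw [mul_assoc ((1/2:ℝ) * t (φ j)), mul_assoc (t (φ j)),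
        mul_inv_cancel₀ hwne0, mul_one]
      ring
    have hmemA : winf ∈ asympTangent C xb d :=
      ⟨fun j => t (φ j), r, fun j => v (φ1 j), fun j => ht _, hrpos, ht0.comp hφt, hr0,
        htr0, hvlim', fun j => by rw [hscal j, hxeq (φ j)]; exact hxC _⟩
    have hvorth : ∀ j, ⟪v j, dk (φ0 j) + d⟫ = 0 := by
      intro j
      show ⟪(‖w (φ0 j)‖⁻¹ : ℝ) • w (φ0 j), _⟫ = 0
      rw [real_inner_smul_left, hworth (φ0 j), mul_zero]
    have horthinf : ⟪winf, d⟫ = 0 := by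
      have hlim2 : Tendsto (fun j => ⟪v (φ1 j), dk (φ j) + d⟫) atTop (𝓝 ⟪winf, d + d⟫) :=
        hvlim'.inner ((hdkd.comp hφt).add tendsto_const_nhds)
      have hz : (fun j => ⟪v (φ1 j), dk (φ j) + d⟫) = fun _ => (0:ℝ) :=
        funext fun j => hvorth _
      rw [hz] at hlim2
      have h10 := tendsto_nhds_unique hlim2 tendsto_const_nhds
      rw [inner_add_right] at h10
      linarith
    have hDgneg : ⟪l, fderiv ℝ g xb winf⟫ < 0 :=
      h1 _ ⟨winf, ⟨hmemA, ⟨horthinf, fun h0 => hwne h0⟩⟩, rfl⟩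
    have hDfpos : 0 < Df winf := by
      have h11 := hl winf
      linarith
    set p : ℕ → ℝ := fun j => q (φ j) * (t (φ j) / r j) with hpdef
    have hp_eq : ∀ j, p j = Df (v (φ1 j)) + (B (dk (φ j)) (dk (φ j))
        + 2*‖d‖^2 * (R (φ j)/‖u (φ j)‖^2)) * (t (φ j)/r j) := by
      intro j
      show q (φ j) * (t (φ j)/r j) = _
      rw [hq_eq (φ j)]
      have hDfv : Df (v (φ1 j)) = ‖w (φ j)‖⁻¹ * Df (w (φ j)) := by
        show Df ((‖w (φ j)‖⁻¹ : ℝ) • w (φ j)) = _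
        rw [map_smul, smul_eq_mul]
      rw [hDfv, htr j]
      ring
    have hplim : Tendsto p atTop (𝓝 (Df winf + (B d d + 2*‖d‖^2 * 0) * 0)) := by
      rw [show p = fun j => Df (v (φ1 j)) + (B (dk (φ j)) (dk (φ j))
        + 2*‖d‖^2 * (R (φ j)/‖u (φ j)‖^2)) * (t (φ j)/r j) from funext hp_eq]
      exact ((Df.continuous.tendsto _).comp hvlim').add
        ((((hBc.tendsto _).comp (hdkd.comp hφt)).add
          ((hR0.comp hφt).const_mul _)).mul htr0)
    have hple : ∀ j, p j ≤ 2*‖d‖^2 * (t (φ j)/r j) := by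
      intro j
      have hq2 : q (φ j) ≤ 2*‖d‖^2 := by
        have h6 := (hqlt (φ j)).le
        have h7 : 2*‖d‖^2/((φ j:ℝ)+1) ≤ 2*‖d‖^2 := by
          refine div_le_self (by positivity) ?_
          have h8 : (0:ℝ) ≤ (φ j:ℝ) := Nat.cast_nonneg _
          linarith
        linarith
      have htrpos : 0 ≤ t (φ j)/r j := le_of_lt (div_pos (ht _) (hrpos j))
      calc p j = q (φ j) * (t (φ j)/r j) := rfl
        _ ≤ 2*‖d‖^2 * (t (φ j)/r j) := mul_le_mul_of_nonneg_right hq2 htrpos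
    have hlim0 : Tendsto (fun j => 2*‖d‖^2 * (t (φ j)/r j)) atTop (𝓝 0) := by
      have h13 := htr0.const_mul (2*‖d‖^2)
      rw [mul_zero] at h13
      exact h13
    have hfinal := le_of_tendsto_of_tendsto' hplim hlim0 hple
    simp only [mul_zero, add_zero] at hfinal
    linarith
end
end

section
/- Let S ⊆ ℝⁿ be closed, x̄ ∈ S, and let x_k ∈ S \ {x̄} converge to x̄ with t_k := ‖x_k − x̄‖ and (x_k − x̄)/t_k → d for some nonzero d ∈ T_S(x̄). Then, after passing to a subsequence, either (a) (x_k − x̄ − t_k d)/((1/2)t_k²) converges to some w ∈ T²_S(x̄; d) ∩ {d}^⊥, or (b) there exists r_k ↓ 0 with t_k/r_k → 0 such that (x_k − x̄ − t_k d)/((1/2)t_k r_k) converges to some w ∈ T''_S(x̄; d) ∩ ({d}^⊥ \ {0}). -/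
open Filter Topology Set
open scoped RealInnerProductSpace

noncomputable section

variable {E : Type*} [NormedAddCommGroup E] [InnerProductSpace ℝ E]

private lemma perp_aux {E : Type*} [NormedAddCommGroup E] [InnerProductSpace ℝ E]
    {d w : E} (hd : ‖d‖ = 1) {c : ℕ → ℝ} {v : ℕ → E}
    (hc0 : Tendsto c atTop (nhds 0)) (hv : Tendsto v atTop (nhds w))
    (hcpos : ∀ k, 0 < c k) (hn : ∀ k, ‖d + c k • v k‖ = 1) :
    ⟪w, d⟫ = 0 := by
  have key : ∀ k, 2 * ⟪d, v k⟫ + c k * ‖v k‖ ^ 2 = 0 := by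
    intro k
    have h1 : ‖d + c k • v k‖ ^ 2 = ‖d‖ ^ 2 + 2 * ⟪d, c k • v k⟫ + ‖c k • v k‖ ^ 2 :=
      norm_add_sq_real d (c k • v k)
    rw [hn k, hd] at h1
    have h2 : ⟪d, c k • v k⟫ = c k * ⟪d, v k⟫ := real_inner_smul_right d (v k) (c k)
    rw [h2, norm_smul, Real.norm_eq_abs, abs_of_pos (hcpos k)] at h1
    have hck := (hcpos k).ne'
    have hmul : c k * (2 * ⟪d, v k⟫ + c k * ‖v k‖ ^ 2) = 0 := by nlinarith [h1]
    rcases mul_eq_zero.1 hmul with h | h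
    · exact absurd h hck
    · exact h
  have hlim : Tendsto (fun k => 2 * ⟪d, v k⟫ + c k * ‖v k‖ ^ 2) atTop
      (nhds (2 * ⟪d, w⟫ + 0 * ‖w‖ ^ 2)) :=
    (tendsto_const_nhds.mul (Tendsto.inner tendsto_const_nhds hv)).add
      (hc0.mul (hv.norm.pow 2))
  have h0 : Tendsto (fun k => 2 * ⟪d, v k⟫ + c k * ‖v k‖ ^ 2) atTop (nhds 0) := by
    simp only [key]; exact tendsto_const_nhds
  have := tendsto_nhds_unique hlim h0
  rw [real_inner_comm]
  nlinarith [this]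

theorem stmt18 {n : ℕ} (S : Set (EuclideanSpace ℝ (Fin n))) (hS : IsClosed S)
    (xb : EuclideanSpace ℝ (Fin n)) (hxb : xb ∈ S)
    (x : ℕ → EuclideanSpace ℝ (Fin n)) (hxS : ∀ k, x k ∈ S) (hxne : ∀ k, x k ≠ xb)
    (hxlim : Tendsto x atTop (nhds xb))
    (d : EuclideanSpace ℝ (Fin n)) (hd0 : d ≠ 0) (hdT : d ∈ tangentConeB S xb)
    (hdir : Tendsto (fun k => (‖x k - xb‖)⁻¹ • (x k - xb)) atTop (nhds d)) :
    ∃ φ : ℕ → ℕ, StrictMono φ ∧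
      ((∃ w ∈ secondTangent S xb d ∩ {w : EuclideanSpace ℝ (Fin n) | ⟪w, d⟫ = 0},
          Tendsto (fun k =>
            ((1/2 : ℝ) * ‖x (φ k) - xb‖ ^ 2)⁻¹ •
              (x (φ k) - xb - ‖x (φ k) - xb‖ • d)) atTop (nhds w)) ∨
        (∃ r : ℕ → ℝ, (∀ k, 0 < r k) ∧ Tendsto r atTop (nhds 0) ∧
          Tendsto (fun k => ‖x (φ k) - xb‖ / r k) atTop (nhds 0) ∧
          ∃ w ∈ asympTangent S xb d ∩
              ({w : EuclideanSpace ℝ (Fin n) | ⟪w, d⟫ = 0} \ {0}),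
            Tendsto (fun k =>
              ((1/2 : ℝ) * ‖x (φ k) - xb‖ * r k)⁻¹ •
                (x (φ k) - xb - ‖x (φ k) - xb‖ • d)) atTop (nhds w))) := by
  have hsub : ∀ k, x k - xb ≠ 0 := fun k => sub_ne_zero.2 (hxne k)
  set t : ℕ → ℝ := fun k => ‖x k - xb‖ with ht_def
  have ht : ∀ k, 0 < t k := fun k => norm_pos_iff.2 (hsub k)
  have htne : ∀ k, t k ≠ 0 := fun k => (ht k).ne'
  have ht0 : Tendsto t atTop (nhds 0) := by
    simpa using (hxlim.sub (tendsto_const_nhds (x := xb))).norm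
  set z : ℕ → EuclideanSpace ℝ (Fin n) := fun k => x k - xb - t k • d with hz_def
  set w : ℕ → EuclideanSpace ℝ (Fin n) := fun k => ((1/2 : ℝ) * t k ^ 2)⁻¹ • z k with hw_def
  set ds : ℕ → EuclideanSpace ℝ (Fin n) := fun k => (t k)⁻¹ • (x k - xb) with hds_def
  have hdss : Tendsto ds atTop (nhds d) := hdir
  have hds1 : ∀ k, ‖ds k‖ = 1 := by
    intro k
    show ‖(t k)⁻¹ • (x k - xb)‖ = 1
    rw [norm_smul, norm_inv, Real.norm_eq_abs, abs_of_pos (ht k)]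
    exact inv_mul_cancel₀ (htne k)
  have hd1 : ‖d‖ = 1 := by
    have h1 : Tendsto (fun k => ‖ds k‖) atTop (nhds ‖d‖) := hdss.norm
    simp only [hds1] at h1
    exact tendsto_nhds_unique h1 tendsto_const_nhds
  have htds : ∀ k, t k • ds k = x k - xb := fun k => smul_inv_smul₀ (htne k) _
  have hzds : ∀ k, z k = t k • (ds k - d) := by
    intro k
    rw [smul_sub, htds k]
  have hxz : ∀ k, xb + t k • d + z k = x k := by
    intro k
    show xb + t k • d + (x k - xb - t k • d) = x k
    abel
  have hkey1 : ∀ k, d + ((1/2 : ℝ) * t k) • w k = ds k := by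
    intro k
    show d + ((1/2:ℝ) * t k) • (((1/2:ℝ) * t k ^ 2)⁻¹ • z k) = (t k)⁻¹ • (x k - xb)
    have hhne : (1/2:ℝ) * t k ≠ 0 := by have := ht k; positivity
    rw [smul_smul, show (1/2:ℝ) * t k * ((1/2:ℝ) * t k ^ 2)⁻¹ = (t k)⁻¹ by
      rw [show (1/2:ℝ) * t k ^ 2 = ((1/2:ℝ) * t k) * t k by ring, mul_inv,
        ← mul_assoc, mul_inv_cancel₀ hhne, one_mul]]
    show d + (t k)⁻¹ • (x k - xb - t k • d) = (t k)⁻¹ • (x k - xb)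
    rw [smul_sub, smul_smul, inv_mul_cancel₀ (htne k), one_smul]
    abel
  by_cases hb : ∃ M : ℝ, ∃ᶠ k in atTop, ‖w k‖ ≤ M
  · -- Case (a): bounded subsequence of w
    obtain ⟨M, hM⟩ := hb
    obtain ⟨φ₁, hφ₁, hφ₁M⟩ := Filter.extraction_of_frequently_atTop hM
    obtain ⟨W, -, φ₂, hφ₂, hφ₂lim⟩ :=
      (isCompact_closedBall (0 : EuclideanSpace ℝ (Fin n)) M).tendsto_subseq
        (x := fun k => w (φ₁ k))
        (fun k => by simpa [Metric.mem_closedBall, dist_zero_right] using hφ₁M k)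
    set φ : ℕ → ℕ := φ₁ ∘ φ₂ with hφ_def
    have hφ : StrictMono φ := hφ₁.comp hφ₂
    have hφtop : Tendsto φ atTop atTop := hφ.tendsto_atTop
    have hwlim : Tendsto (fun k => w (φ k)) atTop (nhds W) := hφ₂lim
    refine ⟨φ, hφ, Or.inl ⟨W, ⟨?_, ?_⟩, ?_⟩⟩
    · refine ⟨fun k => t (φ k), fun k => w (φ k), fun k => ht (φ k),
        ht0.comp hφtop, hwlim, ?_⟩
      intro k
      have htp := ht (φ k)
      have h2 : ((1/2:ℝ) * t (φ k) ^ 2) ≠ 0 := by positivity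
      have h3 : ((1/2:ℝ) * t (φ k) ^ 2) • w (φ k) = z (φ k) := smul_inv_smul₀ h2 _
      rw [h3, hxz (φ k)]
      exact hxS (φ k)
    · refine perp_aux hd1 (c := fun k => (1/2:ℝ) * t (φ k)) (v := fun k => w (φ k))
        ?_ hwlim (fun k => by have := ht (φ k); positivity)
        (fun k => by rw [hkey1 (φ k)]; exact hds1 (φ k))
      simpa using tendsto_const_nhds.mul (ht0.comp hφtop)
    · exact hwlim
  · -- Case (b): ‖w k‖ → ∞
    push_neg at hb
    have hwtop : Tendsto (fun k => ‖w k‖) atTop atTop :=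
      tendsto_atTop.2 fun M =>
        (hb M).mono fun k hk => hk.le
    obtain ⟨N, hN⟩ := eventually_atTop.1 (tendsto_atTop.1 hwtop 1)
    have hzne : ∀ k, N ≤ k → z k ≠ 0 := by
      intro k hk h0
      have h1 := hN k hk
      have hwk : w k = 0 := by
        show ((1/2:ℝ) * t k ^ 2)⁻¹ • z k = 0
        rw [h0, smul_zero]
      rw [hwk, norm_zero] at h1
      norm_num at h1
    set r : ℕ → ℝ := fun k => 2 * ‖z k‖ / t k with hr_def
    have hrpos : ∀ k, N ≤ k → 0 < r k := fun k hk =>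
      div_pos (by have := norm_pos_iff.2 (hzne k hk); positivity) (ht k)
    have hr2 : ∀ k, r k = 2 * ‖ds k - d‖ := by
      intro k
      show 2 * ‖z k‖ / t k = 2 * ‖ds k - d‖
      rw [hzds k, norm_smul, Real.norm_eq_abs, abs_of_pos (ht k)]
      field_simp [htne k]
    have hr0 : Tendsto r atTop (nhds 0) := by
      have h1 : Tendsto (fun k => 2 * ‖ds k - d‖) atTop (nhds 0) := by
        have h2 : Tendsto (fun k => 2 * ‖ds k - d‖) atTop (nhds (2 * ‖d - d‖)) :=
          tendsto_const_nhds.mul ((hdss.sub tendsto_const_nhds).norm)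
        simpa using h2
      rw [show r = (fun k => 2 * ‖ds k - d‖) from funext hr2]
      exact h1
    set u : ℕ → EuclideanSpace ℝ (Fin n) := fun k => ‖z k‖⁻¹ • z k with hu_def
    have hu1 : ∀ k, N ≤ k → ‖u k‖ = 1 := by
      intro k hk
      show ‖‖z k‖⁻¹ • z k‖ = 1
      rw [norm_smul, norm_inv, norm_norm]
      exact inv_mul_cancel₀ (norm_ne_zero_iff.2 (hzne k hk))
    obtain ⟨W, -, ψ, hψ, hψlim⟩ :=
      (isCompact_closedBall (0 : EuclideanSpace ℝ (Fin n)) 1).tendsto_subseq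
        (x := fun k => u (k + N))
        (fun k => by
          simpa [Metric.mem_closedBall, dist_zero_right] using
            (hu1 (k + N) (Nat.le_add_left N k)).le)
    set φ : ℕ → ℕ := fun k => ψ k + N with hφ_def
    have hφN : ∀ k, N ≤ φ k := fun k => Nat.le_add_left N (ψ k)
    have hφ : StrictMono φ := hψ.add_const N
    have hφtop : Tendsto φ atTop atTop := hφ.tendsto_atTop
    have hulim : Tendsto (fun k => u (φ k)) atTop (nhds W) := hψlim
    have hw1 : ‖W‖ = 1 := by
      have heq : (fun k => ‖u (φ k)‖) = fun _ => (1:ℝ) := funext fun k => hu1 _ (hφN k)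
      exact tendsto_nhds_unique (heq ▸ hulim.norm) tendsto_const_nhds
    have hwne : W ≠ 0 := fun h => by rw [h, norm_zero] at hw1; norm_num at hw1
    have hhalf : ∀ k, N ≤ k → ((1/2:ℝ) * t k * r k) = ‖z k‖ := by
      intro k hk
      show (1/2:ℝ) * t k * (2 * ‖z k‖ / t k) = ‖z k‖
      field_simp [htne k]
    have hsm : ∀ k, N ≤ k → ((1/2:ℝ) * t k * r k) • u k = z k := by
      intro k hk
      rw [hhalf k hk]
      exact smul_inv_smul₀ (norm_ne_zero_iff.2 (hzne k hk)) _
    have htr : ∀ k, N ≤ k → t k / r k = ‖w k‖⁻¹ := by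
      intro k hk
      have hzp : (0:ℝ) < ‖z k‖ := norm_pos_iff.2 (hzne k hk)
      show t k / (2 * ‖z k‖ / t k) = ‖((1/2:ℝ) * t k ^ 2)⁻¹ • z k‖⁻¹
      rw [norm_smul, norm_inv, Real.norm_eq_abs,
        abs_of_pos (by have := ht k; positivity : (0:ℝ) < (1/2:ℝ) * t k ^ 2),
        mul_inv, inv_inv]
      rw [div_div_eq_mul_div, div_eq_iff (by positivity : 2 * ‖z k‖ ≠ 0),
        show 1/2 * t k ^ 2 * ‖z k‖⁻¹ * (2 * ‖z k‖) = t k ^ 2 * (‖z k‖⁻¹ * ‖z k‖) by ring,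
        inv_mul_cancel₀ hzp.ne', mul_one]
      ring
    have htrlim : Tendsto (fun k => t (φ k) / r (φ k)) atTop (nhds 0) := by
      have h1 : Tendsto (fun k => ‖w (φ k)‖⁻¹) atTop (nhds 0) :=
        Tendsto.inv_tendsto_atTop (hwtop.comp hφtop)
      rw [show (fun k => t (φ k) / r (φ k)) = fun k => ‖w (φ k)‖⁻¹ from
        funext fun k => htr _ (hφN k)]
      exact h1
    have hkey2 : ∀ k, N ≤ k → d + ((1/2:ℝ) * r k) • u k = ds k := by
      intro k hk
      have hzp : ‖z k‖ ≠ 0 := norm_ne_zero_iff.2 (hzne k hk)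
      show d + ((1/2:ℝ) * (2 * ‖z k‖ / t k)) • (‖z k‖⁻¹ • z k) = (t k)⁻¹ • (x k - xb)
      rw [smul_smul, show (1/2:ℝ) * (2 * ‖z k‖ / t k) * ‖z k‖⁻¹ = (t k)⁻¹ by
        field_simp [htne k, hzp]]
      show d + (t k)⁻¹ • (x k - xb - t k • d) = (t k)⁻¹ • (x k - xb)
      rw [smul_sub, smul_smul, inv_mul_cancel₀ (htne k), one_smul]
      abel
    refine ⟨φ, hφ, Or.inr ⟨fun k => r (φ k), fun k => hrpos _ (hφN k),
      hr0.comp hφtop, htrlim, W, ⟨?_, ?_, ?_⟩, ?_⟩⟩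
    · refine ⟨fun k => t (φ k), fun k => r (φ k), fun k => u (φ k),
        fun k => ht _, fun k => hrpos _ (hφN k), ht0.comp hφtop, hr0.comp hφtop,
        htrlim, hulim, ?_⟩
      intro k
      rw [hsm (φ k) (hφN k), hxz (φ k)]
      exact hxS (φ k)
    · refine perp_aux hd1 (c := fun k => (1/2:ℝ) * r (φ k)) (v := fun k => u (φ k))
        ?_ hulim (fun k => by have := hrpos _ (hφN k); positivity)
        (fun k => by rw [hkey2 _ (hφN k)]; exact hds1 _)
      simpa using tendsto_const_nhds.mul (hr0.comp hφtop)
    · simpa using hwne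
    · have heq : (fun k =>
          ((1/2 : ℝ) * ‖x (φ k) - xb‖ * r (φ k))⁻¹ •
            (x (φ k) - xb - ‖x (φ k) - xb‖ • d)) = fun k => u (φ k) := by
        funext k
        show ((1/2:ℝ) * t (φ k) * r (φ k))⁻¹ • z (φ k) = u (φ k)
        rw [hhalf _ (hφN k)]
      rw [heq]
      exact hulim
end
end

section
/- Let f(x₁,x₂) = x₁ + x₁² + x₂², g(x₁,x₂) = (x₁ + x₂², 2x₂), K = {(y₁,y₂) ∈ ℝ² : y₁ ≥ y₂²/2}, x̄ = (0,0), and d = (0,1). Then C := g⁻¹(K) = {(x₁,x₂) : x₁ ≥ x₂²}, d ∈ T_C(x̄), T²_K(g(x̄); ∇g(x̄)d) = {(w₁,w₂) : w₁ ≥ 4}, and with λ = (−1,0) one has ∇f(x̄)·d = 0, ∇f(x̄) + ∇g(x̄)ᵀλ = 0, ⟨λ, v⟩ < 0 for all v ∈ T''_K(g(x̄); ∇g(x̄)d) ∩ ∇g(x̄)({d}^⊥ \ {0}), and ∇²_{xx}L(x̄,λ)(d,d) − σ_{T²_K(g(x̄);∇g(x̄)d)}(λ) > 0; consequently x̄ satisfies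 the second-order growth condition in direction d. -/
open Filter Topology Set
open scoped RealInnerProductSpace

noncomputable section
set_option maxHeartbeats 1000000

variable {E : Type*} [NormedAddCommGroup E] [InnerProductSpace ℝ E]

/- ### Auxiliary material -/

abbrev Stmt19.E2 := EuclideanSpace ℝ (Fin 2)

namespace Stmt19

abbrev pr (i : Fin 2) : E2 →L[ℝ] ℝ := EuclideanSpace.proj i
abbrev e (i : Fin 2) : E2 := EuclideanSpace.single i 1

abbrev Tf : E2 →L[ℝ] (E2 →L[ℝ] ℝ) :=
  (pr 0).smulRight ((2:ℝ) • (pr 0 : E2 →L[ℝ] ℝ)) + (pr 1).smulRight ((2:ℝ) • (pr 1 : E2 →L[ℝ] ℝ))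

lemma hasfd_f (x : E2) :
    HasFDerivAt (fun y : E2 => y 0 + (y 0)^2 + (y 1)^2) (pr 0 + Tf x) x := by
  have h0 : HasFDerivAt (fun y : E2 => y 0) (pr 0 : E2 →L[ℝ] ℝ) x := (pr 0).hasFDerivAt
  have h1 : HasFDerivAt (fun y : E2 => y 1) (pr 1 : E2 →L[ℝ] ℝ) x := (pr 1).hasFDerivAt
  have h2 : HasFDerivAt (fun y : E2 => (y 0 + y 0 * y 0) + y 1 * y 1)
      (pr 0 + (x 0 • (pr 0 : E2 →L[ℝ] ℝ) + x 0 • pr 0) + (x 1 • pr 1 + x 1 • pr 1)) x :=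
    (h0.add (h0.mul h0)).add (h1.mul h1)
  have h3 : (fun y : E2 => (y 0 + y 0 * y 0) + y 1 * y 1)
      = fun y : E2 => y 0 + (y 0)^2 + (y 1)^2 := by
    funext y; ring
  rw [h3] at h2
  convert h2 using 1
  ext u
  simp [ContinuousLinearMap.smulRight_apply]
  ring

abbrev A0 : E2 →L[ℝ] E2 := (pr 0).smulRight (e 0) + (pr 1).smulRight ((2:ℝ) • (e 1))
abbrev B : E2 →L[ℝ] E2 := (pr 1).smulRight (e 0)
abbrev Tg : E2 →L[ℝ] (E2 →L[ℝ] E2) := (pr 1).smulRight ((2:ℝ) • (B : E2 →L[ℝ] E2))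

lemma hasfd_g (x : E2) :
    HasFDerivAt (fun y : E2 => A0 y + (y 1)^2 • e 0) (A0 + Tg x) x := by
  have h1 : HasFDerivAt (fun y : E2 => y 1) (pr 1 : E2 →L[ℝ] ℝ) x := (pr 1).hasFDerivAt
  have hsq : HasFDerivAt (fun y : E2 => (y 1)^2) (x 1 • (pr 1 : E2 →L[ℝ] ℝ) + x 1 • pr 1) x := by
    have h := h1.mul h1
    have h3 : ((fun y : E2 => y 1) * fun y : E2 => y 1) = fun y : E2 => (y 1)^2 := by funext y; simp only [Pi.mul_apply]; ring
    rwa [h3] at h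
  have h := (A0.hasFDerivAt (x := x)).add (hsq.smul (hasFDerivAt_const (e 0) x))
  refine h.congr_fderiv ?_
  ext u i
  simp [ContinuousLinearMap.smulRight_apply]
  ring

lemma abs_coord_le (v : E2) (i : Fin 2) : |v i| ≤ ‖v‖ := by
  rw [EuclideanSpace.norm_eq]
  have h1 : |v i| = Real.sqrt (‖v i‖ ^ 2) := by
    rw [Real.sqrt_sq_eq_abs]; simp
  rw [h1]
  exact Real.sqrt_le_sqrt (Finset.single_le_sum (f := fun j => ‖v j‖ ^ 2)
    (fun j _ => sq_nonneg _) (Finset.mem_univ i))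

lemma sec_calc (v : E2) (hv0 : v 0 = 0) (hv1 : v 1 = 2) :
    secondTangent {y : E2 | (y 1)^2/2 ≤ y 0} 0 v = {w : E2 | 4 ≤ w 0} := by
  ext w
  constructor
  · rintro ⟨t, wk, ht, htt, hwk, hmem⟩
    have hw0 : Tendsto (fun k => wk k 0) atTop (𝓝 (w 0)) :=
      ((EuclideanSpace.proj (0 : Fin 2)).continuous.tendsto w).comp hwk
    have hw1 : Tendsto (fun k => wk k 1) atTop (𝓝 (w 1)) :=
      ((EuclideanSpace.proj (1 : Fin 2)).continuous.tendsto w).comp hwk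
    have key : ∀ k, (2 + t k / 2 * wk k 1) ^ 2 ≤ wk k 0 := by
      intro k
      have h := hmem k
      simp only [Set.mem_setOf_eq, PiLp.add_apply, PiLp.smul_apply, PiLp.zero_apply,
        smul_eq_mul, hv0, hv1] at h
      have htk := ht k
      have h2 : t k ^ 2 * ((2 + t k / 2 * wk k 1) ^ 2) ≤ t k ^ 2 * wk k 0 := by nlinarith [h]
      exact (mul_le_mul_iff_right₀ (by positivity)).mp h2
    have hlim : Tendsto (fun k => (2 + t k / 2 * wk k 1) ^ 2) atTop (𝓝 4) := by
      have hb : Tendsto (fun k => 2 + t k / 2 * wk k 1) atTop (𝓝 (2 + 0 / 2 * w 1)) :=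
        (((htt.div_const 2).mul hw1).const_add 2)
      have hb2 := hb.pow 2
      have h4 : (2 + 0 / 2 * w 1 : ℝ) ^ 2 = 4 := by norm_num
      rwa [h4] at hb2
    exact le_of_tendsto_of_tendsto' hlim hw0 key
  · intro hw
    refine ⟨fun k => 1 / (k + 1), fun k => w + ((2 + (1 / (k + 1 : ℝ)) / 2 * w 1) ^ 2 - 4) • e 0,
      fun k => by positivity, tendsto_one_div_add_atTop_nhds_zero_nat, ?_, ?_⟩
    · have hc : Tendsto (fun k : ℕ => (2 + (1 / (k + 1 : ℝ)) / 2 * w 1) ^ 2 - 4) atTop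
          (𝓝 ((2 + 0 / 2 * w 1) ^ 2 - 4)) := by
        exact ((((tendsto_one_div_add_atTop_nhds_zero_nat.div_const 2).mul
          tendsto_const_nhds).const_add 2).pow 2).sub_const 4
      have h0 : ((2 : ℝ) + 0 / 2 * w 1) ^ 2 - 4 = 0 := by norm_num
      rw [h0] at hc
      have := hc.smul_const (e 0)
      simpa using Tendsto.const_add w this
    · intro k
      have hw4 : 4 ≤ w 0 := hw
      have hsk : (0:ℝ) < 1 / (k + 1 : ℝ) := by positivity
      simp only [Set.mem_setOf_eq, PiLp.add_apply, PiLp.smul_apply, PiLp.zero_apply,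
        smul_eq_mul, hv0, hv1, EuclideanSpace.single_apply, Fin.isValue, one_ne_zero,
        reduceIte, mul_one, mul_zero, add_zero]
      nlinarith [mul_nonneg (sq_nonneg (1 / (k + 1 : ℝ))) (sub_nonneg.mpr hw4)]

lemma asymp_sub (v : E2) (hv0 : v 0 = 0) (hv1 : v 1 = 2) :
    asympTangent {y : E2 | (y 1)^2/2 ≤ y 0} 0 v ⊆ {w : E2 | 0 ≤ w 0} := by
  rintro w ⟨t, r, wk, ht, hr, htt, hrr, htr, hwk, hmem⟩
  have hw0 : Tendsto (fun k => wk k 0) atTop (𝓝 (w 0)) :=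
    ((EuclideanSpace.proj (0 : Fin 2)).continuous.tendsto w).comp hwk
  have key : ∀ k, 0 ≤ wk k 0 := by
    intro k
    have h := hmem k
    simp only [Set.mem_setOf_eq, PiLp.add_apply, PiLp.smul_apply, PiLp.zero_apply,
      smul_eq_mul, hv0, hv1] at h
    have htk := ht k
    have hrk := hr k
    nlinarith [mul_pos htk hrk, sq_nonneg (0 + t k * 2 + 1 / 2 * t k * r k * wk k 1)]
  exact le_of_tendsto_of_tendsto' tendsto_const_nhds hw0 key

end Stmt19

open Stmt19
theorem stmt19 (f : EuclideanSpace ℝ (Fin 2) → ℝ)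
    (hf : ∀ x : EuclideanSpace ℝ (Fin 2), f x = x 0 + (x 0) ^ 2 + (x 1) ^ 2)
    (g : EuclideanSpace ℝ (Fin 2) → EuclideanSpace ℝ (Fin 2))
    (hg : ∀ x : EuclideanSpace ℝ (Fin 2), g x 0 = x 0 + (x 1) ^ 2 ∧ g x 1 = 2 * x 1)
    (K : Set (EuclideanSpace ℝ (Fin 2)))
    (hK : K = {y : EuclideanSpace ℝ (Fin 2) | (y 1) ^ 2 / 2 ≤ y 0})
    (xb d l : EuclideanSpace ℝ (Fin 2)) (hxb : xb = 0)
    (hd0 : d 0 = 0) (hd1 : d 1 = 1) (hl0 : l 0 = -1) (hl1 : l 1 = 0) :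
    g ⁻¹' K = {x : EuclideanSpace ℝ (Fin 2) | (x 1) ^ 2 ≤ x 0} ∧
    d ∈ tangentConeB (g ⁻¹' K) xb ∧
    secondTangent K (g xb) (fderiv ℝ g xb d) =
      {w : EuclideanSpace ℝ (Fin 2) | 4 ≤ w 0} ∧
    fderiv ℝ f xb d = 0 ∧
    (∀ u, fderiv ℝ f xb u + ⟪l, fderiv ℝ g xb u⟫ = 0) ∧
    (∀ v ∈ asympTangent K (g xb) (fderiv ℝ g xb d) ∩
        (fderiv ℝ g xb '' ({w : EuclideanSpace ℝ (Fin 2) | ⟪w, d⟫ = 0} \ {0})),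
      ⟪l, v⟫ < 0) ∧
    (0 : EReal) <
      (((fderiv ℝ (fderiv ℝ f) xb d) d + ⟪l, (fderiv ℝ (fderiv ℝ g) xb d) d⟫ : ℝ) : EReal) -
        suppFn (secondTangent K (g xb) (fderiv ℝ g xb d)) l ∧
    ∃ κ > (0:ℝ), ∃ ρ > (0:ℝ), ∃ δ > (0:ℝ), ∀ x ∈ g ⁻¹' K,
      x - xb ∈ dirNbhd d ρ δ → f xb + κ * ‖x - xb‖ ^ 2 ≤ f x := by
  subst hK hxb
  have hf' : f = fun y : E2 => y 0 + (y 0)^2 + (y 1)^2 := funext hf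
  have hg' : g = fun y : E2 => A0 y + (y 1)^2 • e 0 := by
    funext y; ext i
    fin_cases i <;>
      simp [(hg y).1, (hg y).2, ContinuousLinearMap.smulRight_apply,
        EuclideanSpace.single_apply] <;> ring
  -- first derivatives
  have hDff : fderiv ℝ f = fun x => (pr 0 : E2 →L[ℝ] ℝ) + Tf x := by
    rw [hf']; exact funext fun x => (hasfd_f x).fderiv
  have hDgg : fderiv ℝ g = fun x => (A0 : E2 →L[ℝ] E2) + Tg x := by
    rw [hg']; exact funext fun x => (hasfd_g x).fderiv
  -- second derivatives
  have h2f : fderiv ℝ (fderiv ℝ f) 0 = Tf := by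
    rw [hDff]; exact (Tf.hasFDerivAt.const_add (pr 0)).fderiv
  have h2g : fderiv ℝ (fderiv ℝ g) 0 = Tg := by
    rw [hDgg]; exact (Tg.hasFDerivAt.const_add A0).fderiv
  have hgz : g 0 = 0 := by
    ext i
    fin_cases i <;> simp [(hg 0).1, (hg 0).2]
  -- gradient components
  have hvd0 : (((A0 : E2 →L[ℝ] E2) + Tg 0) d) 0 = 0 := by
    simp [ContinuousLinearMap.smulRight_apply, EuclideanSpace.single_apply, hd0, hd1]
  have hvd1 : (((A0 : E2 →L[ℝ] E2) + Tg 0) d) 1 = 2 := by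
    simp [ContinuousLinearMap.smulRight_apply, EuclideanSpace.single_apply, hd0, hd1]
  -- conjunct 1
  have hC : g ⁻¹' {y : E2 | (y 1) ^ 2 / 2 ≤ y 0} = {x : E2 | (x 1) ^ 2 ≤ x 0} := by
    ext x
    simp only [Set.mem_preimage, Set.mem_setOf_eq, (hg x).1, (hg x).2]
    constructor <;> intro h <;> nlinarith
  -- the second-order tangent set
  have hsec : secondTangent {y : E2 | (y 1) ^ 2 / 2 ≤ y 0} (g 0) (fderiv ℝ g 0 d)
      = {w : E2 | 4 ≤ w 0} := by
    rw [hgz, hDgg]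
    exact sec_calc _ hvd0 hvd1
  -- support function value
  have hinner : ∀ u : E2, ⟪l, u⟫ = -u 0 := by
    intro u
    simp [PiLp.inner_apply, RCLike.inner_apply, Fin.sum_univ_two, hl0, hl1]
  have hsupp : suppFn {w : E2 | 4 ≤ w 0} l = ((-4 : ℝ) : EReal) := by
    apply le_antisymm
    · refine iSup₂_le fun u hu => ?_
      have hu' : (4:ℝ) ≤ u 0 := hu
      have : ⟪l, u⟫ ≤ (-4 : ℝ) := by rw [hinner u]; linarith
      exact_mod_cast EReal.coe_le_coe_iff.mpr this
    · have hm : ((4:ℝ) • e 0 : E2) ∈ {w : E2 | 4 ≤ w 0} := by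
        simp [EuclideanSpace.single_apply]
      have hval : ((⟪l, ((4:ℝ) • e 0 : E2)⟫ : ℝ) : EReal) = ((-4 : ℝ) : EReal) := by
        congr 1
        rw [hinner]
        simp [EuclideanSpace.single_apply]
      calc ((-4 : ℝ) : EReal) = ((⟪l, ((4:ℝ) • e 0 : E2)⟫ : ℝ) : EReal) := hval.symm
        _ ≤ _ := le_iSup₂ (f := fun (u : E2) (_ : u ∈ {w : E2 | 4 ≤ w 0}) =>
            ((⟪l, u⟫ : ℝ) : EReal)) _ hm
  refine ⟨hC, ?_, ?_, ?_, ?_, ?_, ?_, ?_⟩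
  · -- tangent cone membership
    rw [hC]
    refine ⟨fun k => 1 / (k + 1), fun k => (1 / (k + 1 : ℝ)) • e 0 + d,
      fun k => by positivity, tendsto_one_div_add_atTop_nhds_zero_nat, ?_, ?_⟩
    · have := ((tendsto_one_div_add_atTop_nhds_zero_nat (𝕜 := ℝ)).smul_const (e 0)).add
        (tendsto_const_nhds (α := ℕ) (x := d))
      simpa using this
    · intro k
      have hsk : (0:ℝ) < 1 / (k + 1 : ℝ) := by positivity
      simp only [Set.mem_setOf_eq, PiLp.add_apply, PiLp.smul_apply, PiLp.zero_apply,
        smul_eq_mul, EuclideanSpace.single_apply, hd0, hd1, Fin.isValue, one_ne_zero,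
        reduceIte, mul_one, mul_zero, add_zero, zero_add]
      nlinarith [sq_nonneg (1 / (k + 1 : ℝ))]
  · -- second tangent set
    exact hsec
  · -- ∇f(x̄)d = 0
    rw [hDff]
    simp [ContinuousLinearMap.smulRight_apply, hd0]
  · -- ∇f + ∇gᵀλ = 0
    intro u
    rw [hDff, hDgg]
    simp [ContinuousLinearMap.smulRight_apply, PiLp.inner_apply, RCLike.inner_apply,
      Fin.sum_univ_two, EuclideanSpace.single_apply, hl0, hl1]
    try ring
  · -- asymptotic cone condition
    rintro v ⟨hva, u, ⟨hu1, hu2⟩, rfl⟩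
    have hu1' : u 1 = 0 := by
      have := hu1
      simp only [Set.mem_setOf_eq, PiLp.inner_apply, RCLike.inner_apply, conj_trivial,
        Fin.sum_univ_two, hd0, hd1, mul_zero, mul_one, zero_add] at this
      linarith [this]
    have hu0 : u 0 ≠ 0 := by
      intro h0
      apply hu2
      show u = 0
      ext i
      fin_cases i
      · simpa using h0
      · simpa using hu1'
    have hv0 : (fderiv ℝ g 0 u) 0 = u 0 := by
      rw [hDgg]
      simp [ContinuousLinearMap.smulRight_apply, EuclideanSpace.single_apply, hu1']
    have hge : 0 ≤ (fderiv ℝ g 0 u) 0 := by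
      have hva' := hva
      rw [hgz] at hva'
      exact asymp_sub (fderiv ℝ g 0 d) (by rw [hDgg]; exact hvd0)
        (by rw [hDgg]; exact hvd1) hva'
    rw [hinner, hv0]
    have : 0 < u 0 := lt_of_le_of_ne (hv0 ▸ hge) (Ne.symm hu0)
    linarith
  · -- second-order condition
    rw [h2f, h2g, hsec, hsupp]
    have hval : ((Tf d) d) + ⟪l, (Tg d) d⟫ = 0 := by
      rw [hinner]
      simp [ContinuousLinearMap.smulRight_apply, EuclideanSpace.single_apply, hd0, hd1]
    rw [hval, ← EReal.coe_sub]
    norm_num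
  · -- growth condition
    refine ⟨1/2, by norm_num, 1/2, by norm_num, 1, by norm_num, ?_⟩
    intro x hx hnb
    rw [hC] at hx
    have hx' : (x 1) ^ 2 ≤ x 0 := hx
    rw [sub_zero] at hnb ⊢
    have hnd : ‖d‖ = 1 := by
      rw [EuclideanSpace.norm_eq]
      simp [Fin.sum_univ_two, hd0, hd1]
    obtain ⟨-, hnb2⟩ := hnb
    rw [hnd] at hnb2
    have hcomp : |(((1:ℝ) • x - ‖x‖ • d) : E2) 1| ≤ ‖((1:ℝ) • x - ‖x‖ • d : E2)‖ :=
      abs_coord_le _ 1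
    have hc1 : (((1:ℝ) • x - ‖x‖ • d) : E2) 1 = x 1 - ‖x‖ := by
      simp [PiLp.sub_apply, PiLp.smul_apply, hd1]
    rw [hc1] at hcomp
    have habs : |x 1 - ‖x‖| ≤ 1/2 * ‖x‖ := by
      calc |x 1 - ‖x‖| ≤ ‖((1:ℝ) • x - ‖x‖ • d : E2)‖ := hcomp
        _ ≤ 1/2 * ‖x‖ * 1 := hnb2
        _ = 1/2 * ‖x‖ := by ring
    have hx1 : ‖x‖ / 2 ≤ x 1 := by
      have := (abs_le.mp habs).1
      linarith
    have hq : (‖x‖ / 2) ^ 2 ≤ (x 1) ^ 2 :=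
      pow_le_pow_left₀ (by positivity) hx1 2
    rw [hf x, hf 0]
    simp only [PiLp.zero_apply]
    nlinarith [sq_nonneg (x 0), hq, hx']
end
end
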